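/- arXiv:2110.04396 — 5 statements merged into one kernel-verified Lean document; each statement's English description precedes it below -/
import Mathlib

section
/- Let (Ω, F, P) be a probability space, let m1, mk, N1, Nk be real-valued random variables with N1 ≥ 1 and Nk ≥ 1 almost surely, fix real numbers μ1 > μk with gap Δ = μ1 − μk > 0, constants σ > 0 and ξ > 0, and integers 1 ≤ t ≤ T. Define the random confidence radii C1 = σ·√(2(ξ+1)·ln t / N1) and Ck = σ·√(2(ξ+1)·ln t / Nk). Then for every event E contained in {mk + Ck ≥ m1 + C1} ∩ {Nk > 8(ξ+1)σ²·ln T / Δ²}, one has P(E) ≤ P(m1 ≤ μ1 − C1) + P(mk ≥ μk + Ck). -/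
open MeasureTheory

/-- Abstraction of Lemma 1 (restating Auer et al.): the event that a suboptimal arm's
UCB index dominates the optimal arm's, while the suboptimal arm has already been observed
more than `8(ξ+1)σ²·ln T / Δ²` times, is bounded by the two tail probabilities. -/
theorem ucb_event_tail_bound {Ω : Type*} [MeasurableSpace Ω]
    (P : Measure Ω) [IsProbabilityMeasure P]
    (m1 mk N1 Nk : Ω → ℝ)
    (hN1 : ∀ᵐ ω ∂P, 1 ≤ N1 ω) (hNk : ∀ᵐ ω ∂P, 1 ≤ Nk ω)
    (μ1 μk Δ : ℝ) (hμ : μk < μ1) (hΔ : Δ = μ1 - μk)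
    (σ ξ : ℝ) (hσ : 0 < σ) (hξ : 0 < ξ)
    (t T : ℕ) (ht : 1 ≤ t) (htT : t ≤ T)
    (C1 Ck : Ω → ℝ)
    (hC1 : ∀ ω, C1 ω = σ * Real.sqrt (2 * (ξ + 1) * Real.log t / N1 ω))
    (hCk : ∀ ω, Ck ω = σ * Real.sqrt (2 * (ξ + 1) * Real.log t / Nk ω))
    (E : Set Ω)
    (hE : E ⊆ {ω | mk ω + Ck ω ≥ m1 ω + C1 ω} ∩
      {ω | Nk ω > 8 * (ξ + 1) * σ ^ 2 * Real.log T / Δ ^ 2}) :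
    P E ≤ P {ω | m1 ω ≤ μ1 - C1 ω} + P {ω | mk ω ≥ μk + Ck ω} := by
  have hΔpos : 0 < Δ := by rw [hΔ]; linarith
  have hξ1 : 0 < ξ + 1 := by linarith
  have hsub : E ⊆ {ω | m1 ω ≤ μ1 - C1 ω} ∪ {ω | mk ω ≥ μk + Ck ω} := by
    intro ω hω
    obtain ⟨hdom, hNkbig⟩ := hE hω
    simp only [Set.mem_setOf_eq] at hdom hNkbig
    -- show 2 * Ck ω < Δ
    have hCkle : 2 * Ck ω < Δ := by
      rw [hCk]
      have hlogt : 0 ≤ Real.log t := Real.log_natCast_nonneg t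
      rcases eq_or_lt_of_le hlogt with h0 | hpos
      · rw [← h0]
        simp only [mul_zero, zero_mul, zero_div, Real.sqrt_zero, mul_zero]
        linarith
      · -- ln t > 0, so Nk > 8(ξ+1)σ² ln t / Δ² > 0
        have hlogT : Real.log t ≤ Real.log T := by
          apply Real.log_le_log (by positivity)
          exact_mod_cast htT
        have hηpos : 0 < 8 * (ξ + 1) * σ ^ 2 * Real.log t / Δ ^ 2 := by positivity
        have hNkpos : 0 < Nk ω := by
          have : 8 * (ξ + 1) * σ ^ 2 * Real.log t / Δ ^ 2
              ≤ 8 * (ξ + 1) * σ ^ 2 * Real.log T / Δ ^ 2 := by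
            apply div_le_div_of_nonneg_right _ (by positivity)
            exact mul_le_mul_of_nonneg_left hlogT (by positivity)
          linarith
        have harg : 2 * (ξ + 1) * Real.log t / Nk ω < (Δ / (2 * σ)) ^ 2 := by
          rw [div_lt_iff₀ hNkpos]
          have h1 : 8 * (ξ + 1) * σ ^ 2 * Real.log t / Δ ^ 2 < Nk ω := by
            have : 8 * (ξ + 1) * σ ^ 2 * Real.log t / Δ ^ 2
                ≤ 8 * (ξ + 1) * σ ^ 2 * Real.log T / Δ ^ 2 := by
              apply div_le_div_of_nonneg_right _ (by positivity)
              exact mul_le_mul_of_nonneg_left hlogT (by positivity)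
            linarith
          rw [div_lt_iff₀ (by positivity)] at h1
          have hsq : (Δ / (2 * σ)) ^ 2 = Δ ^ 2 / (4 * σ ^ 2) := by
            field_simp; ring
          rw [hsq, div_mul_eq_mul_div, lt_div_iff₀ (by positivity)]
          nlinarith
        have hsqrt : Real.sqrt (2 * (ξ + 1) * Real.log t / Nk ω) < Δ / (2 * σ) := by
          rw [Real.sqrt_lt' (by positivity)]
          exact harg
        calc 2 * (σ * Real.sqrt (2 * (ξ + 1) * Real.log t / Nk ω))
            < 2 * (σ * (Δ / (2 * σ))) := by
              apply mul_lt_mul_of_pos_left _ (by norm_num)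
              exact mul_lt_mul_of_pos_left hsqrt hσ
          _ = Δ := by field_simp
    by_contra hcon
    simp only [Set.mem_union, Set.mem_setOf_eq, not_or, not_le, ge_iff_le] at hcon
    obtain ⟨h1, h2⟩ := hcon
    -- m1 > μ1 - C1, mk < μk + Ck
    have : mk ω + Ck ω < μk + 2 * Ck ω := by linarith
    have : μ1 - C1 ω + C1 ω < mk ω + Ck ω := by linarith
    rw [hΔ] at hCkle
    linarith
  calc P E ≤ P ({ω | m1 ω ≤ μ1 - C1 ω} ∪ {ω | mk ω ≥ μk + Ck ω}) := measure_mono hsub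
    _ ≤ _ := measure_union_le _ _
end

section
/- Let (Ω, F, P) be a probability space with a filtration (F_t)_{t∈ℕ} and let σ > 0. Let (Y_t)_{t≥1} be a real-valued adapted process and (ε_t)_{t≥1} a nonnegative predictable process (ε_t is F_{t−1}-measurable), and assume that for every λ > 0 and every t ≥ 1, exp(λ·Y_t) is integrable and E[exp(λ·Y_t) | F_{t−1}] ≤ exp(λ²σ²·ε_t/2) almost surely. Set Z_t = Σ_{τ=1}^{t} Y_τ and N_t = Σ_{τ=1}^{t} ε_τ. Fix t ≥ 1, ζ > 1 and D > 0 such that 1 ≤ N_t ≤ ζ^{D} almost surely, and set κ = 1/(σ²·(ζ^{1/4} + ζ^{−1/4})²). Then for every θ > 0, P(Z_t ≥ √(θ·N_t)) ≤ ⌈D⌉·exp(−2κθ). -/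
open MeasureTheory Filter

lemma pullout_bound {Ω : Type*} [m0 : MeasurableSpace Ω] (P : Measure Ω)
    [IsProbabilityMeasure P] {m : MeasurableSpace Ω} (hm : m ≤ m0)
    {g f h : Ω → ℝ}
    (hg : StronglyMeasurable[m] g) (hg0 : ∀ ω, 0 ≤ g ω) (hgi : Integrable g P)
    (hf : StronglyMeasurable[m0] f) (hf0 : ∀ ω, 0 ≤ f ω) (hfi : Integrable f P)
    (hh0 : ∀ ω, 0 ≤ h ω)
    (hcond : ∀ᵐ ω ∂P, (P[f|m]) ω ≤ h ω)
    (hghi : Integrable (fun ω => g ω * h ω) P) :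
    Integrable (fun ω => g ω * f ω) P ∧ ∫ ω, g ω * f ω ∂P ≤ ∫ ω, g ω * h ω ∂P := by
  set fn : ℕ → Ω → ℝ := fun n ω => min (f ω) n with hfn_def
  have hfn0 : ∀ n ω, 0 ≤ fn n ω := fun n ω => le_min (hf0 ω) (Nat.cast_nonneg n)
  have hfn_le : ∀ n ω, fn n ω ≤ f ω := fun n ω => min_le_left _ _
  have hfn_sm : ∀ n, StronglyMeasurable[m0] (fn n) :=
    fun n => (continuous_id.min continuous_const).comp_stronglyMeasurable hf
  have hfn_i : ∀ n, Integrable (fn n) P := by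
    intro n
    refine hfi.mono (hfn_sm n).aestronglyMeasurable ?_
    filter_upwards with ω
    rw [Real.norm_eq_abs, Real.norm_eq_abs, abs_of_nonneg (hfn0 n ω),
      abs_of_nonneg (hf0 ω)]
    exact hfn_le n ω
  have hgfn_sm : ∀ n, StronglyMeasurable[m0] (fun ω => g ω * fn n ω) :=
    fun n => (hg.mono hm).mul (hfn_sm n)
  have hgfn_i : ∀ n, Integrable (fun ω => g ω * fn n ω) P := by
    intro n
    refine (hgi.const_mul (n : ℝ)).mono (hgfn_sm n).aestronglyMeasurable ?_
    filter_upwards with ω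
    rw [Real.norm_eq_abs, Real.norm_eq_abs, abs_of_nonneg (mul_nonneg (hg0 ω) (hfn0 n ω)),
      abs_of_nonneg (mul_nonneg (Nat.cast_nonneg n) (hg0 ω))]
    calc g ω * fn n ω ≤ g ω * n := mul_le_mul_of_nonneg_left (min_le_right _ _) (hg0 ω)
      _ = n * g ω := mul_comm _ _
  have hghnn : (0:ℝ) ≤ ∫ ω, g ω * h ω ∂P :=
    integral_nonneg fun ω => mul_nonneg (hg0 ω) (hh0 ω)
  have key : ∀ n, ∫ ω, g ω * fn n ω ∂P ≤ ∫ ω, g ω * h ω ∂P := by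
    intro n
    have hpull : P[fun ω => g ω * fn n ω | m] =ᵐ[P] fun ω => g ω * (P[fn n|m]) ω :=
      condExp_mul_of_stronglyMeasurable_left hg (hgfn_i n) (hfn_i n)
    have hle : (fun ω => g ω * (P[fn n|m]) ω) ≤ᵐ[P] fun ω => g ω * h ω := by
      have h1 : P[fn n|m] ≤ᵐ[P] P[f|m] :=
        condExp_mono (hfn_i n) hfi (Filter.Eventually.of_forall (hfn_le n))
      filter_upwards [h1, hcond] with ω h1 h2
      exact mul_le_mul_of_nonneg_left (h1.trans h2) (hg0 ω)
    calc ∫ ω, g ω * fn n ω ∂P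
        = ∫ ω, (P[fun ω => g ω * fn n ω | m]) ω ∂P := (integral_condExp hm).symm
      _ = ∫ ω, g ω * (P[fn n|m]) ω ∂P := integral_congr_ae hpull
      _ ≤ ∫ ω, g ω * h ω ∂P := by
          refine integral_mono_ae (integrable_condExp.congr hpull) hghi hle
  have hlim : ∫⁻ ω, ENNReal.ofReal (g ω * f ω) ∂P ≤ ENNReal.ofReal (∫ ω, g ω * h ω ∂P) := by
    have hptw : ∀ ω, Tendsto (fun n => ENNReal.ofReal (g ω * fn n ω)) atTop
        (nhds (ENNReal.ofReal (g ω * f ω))) := by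
      intro ω
      have : ∀ᶠ n : ℕ in atTop, ENNReal.ofReal (g ω * f ω) = ENNReal.ofReal (g ω * fn n ω) := by
        filter_upwards [eventually_ge_atTop ⌈f ω⌉₊] with n hn
        have : fn n ω = f ω := min_eq_left ((Nat.le_ceil _).trans (by exact_mod_cast hn))
        rw [this]
      exact Tendsto.congr' this tendsto_const_nhds
    calc ∫⁻ ω, ENNReal.ofReal (g ω * f ω) ∂P
        = ∫⁻ ω, liminf (fun n => ENNReal.ofReal (g ω * fn n ω)) atTop ∂P := by
          refine lintegral_congr fun ω => ((hptw ω).liminf_eq).symm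
      _ ≤ liminf (fun n => ∫⁻ ω, ENNReal.ofReal (g ω * fn n ω) ∂P) atTop :=
          lintegral_liminf_le fun n => (hgfn_sm n).measurable.ennreal_ofReal
      _ ≤ liminf (fun _ : ℕ => ENNReal.ofReal (∫ ω, g ω * h ω ∂P)) atTop := by
          refine Filter.liminf_le_liminf (Filter.Eventually.of_forall fun n => ?_)
          rw [← ofReal_integral_eq_lintegral_ofReal (hgfn_i n)
            (Filter.Eventually.of_forall fun ω => mul_nonneg (hg0 ω) (hfn0 n ω))]
          exact ENNReal.ofReal_le_ofReal (key n)
      _ = ENNReal.ofReal (∫ ω, g ω * h ω ∂P) := liminf_const _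
  have hgf_int : Integrable (fun ω => g ω * f ω) P := by
    refine ⟨((hg.mono hm).mul hf).aestronglyMeasurable, ?_⟩
    rw [hasFiniteIntegral_iff_norm]
    have : ∀ ω, ENNReal.ofReal ‖g ω * f ω‖ = ENNReal.ofReal (g ω * f ω) := fun ω => by
      rw [Real.norm_of_nonneg (mul_nonneg (hg0 ω) (hf0 ω))]
    simp only [this]
    exact lt_of_le_of_lt hlim ENNReal.ofReal_lt_top
  refine ⟨hgf_int, ?_⟩
  rw [integral_eq_lintegral_of_nonneg_ae
    (Filter.Eventually.of_forall fun ω => mul_nonneg (hg0 ω) (hf0 ω))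
    hgf_int.aestronglyMeasurable]
  calc (∫⁻ ω, ENNReal.ofReal (g ω * f ω) ∂P).toReal
      ≤ (ENNReal.ofReal (∫ ω, g ω * h ω ∂P)).toReal :=
        ENNReal.toReal_mono ENNReal.ofReal_ne_top hlim
    _ = ∫ ω, g ω * h ω ∂P := ENNReal.toReal_ofReal hghnn

lemma supermart_bound {Ω : Type*} [m0 : MeasurableSpace Ω]
    (P : Measure Ω) [IsProbabilityMeasure P] (ℱ : Filtration ℕ m0)
    (σ : ℝ) (Y ε : ℕ → Ω → ℝ)
    (hY_adapted : ∀ t, 1 ≤ t → StronglyMeasurable[ℱ t] (Y t))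
    (hε_pred : ∀ t, 1 ≤ t → StronglyMeasurable[ℱ (t - 1)] (ε t))
    (hε_nonneg : ∀ t, 1 ≤ t → ∀ ω, 0 ≤ ε t ω)
    (hint : ∀ lam : ℝ, 0 < lam → ∀ t, 1 ≤ t →
      Integrable (fun ω => Real.exp (lam * Y t ω)) P)
    (hmgf : ∀ lam : ℝ, 0 < lam → ∀ t, 1 ≤ t → ∀ᵐ ω ∂P,
      (P[fun ω => Real.exp (lam * Y t ω)|ℱ (t - 1)]) ω ≤
        Real.exp (lam ^ 2 * σ ^ 2 * ε t ω / 2))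
    (lam : ℝ) (hlam : 0 < lam) :
    ∀ τ : ℕ,
      Integrable (fun ω => Real.exp (∑ i ∈ Finset.Icc 1 τ,
        (lam * Y i ω - lam ^ 2 * σ ^ 2 / 2 * ε i ω))) P ∧
      ∫ ω, Real.exp (∑ i ∈ Finset.Icc 1 τ,
        (lam * Y i ω - lam ^ 2 * σ ^ 2 / 2 * ε i ω)) ∂P ≤ 1 := by
  intro τ
  induction τ with
  | zero =>
    have : Finset.Icc 1 0 = (∅ : Finset ℕ) := Finset.Icc_eq_empty (by omega)
    simp [this]
  | succ τ IH =>
    set M : Ω → ℝ := fun ω => Real.exp (∑ i ∈ Finset.Icc 1 τ,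
      (lam * Y i ω - lam ^ 2 * σ ^ 2 / 2 * ε i ω)) with hM_def
    set g : Ω → ℝ := fun ω => M ω * Real.exp (-(lam ^ 2 * σ ^ 2 / 2 * ε (τ+1) ω)) with hg_def
    set f : Ω → ℝ := fun ω => Real.exp (lam * Y (τ+1) ω) with hf_def
    set h : Ω → ℝ := fun ω => Real.exp (lam ^ 2 * σ ^ 2 * ε (τ+1) ω / 2) with hh_def
    have hε1 : StronglyMeasurable[ℱ τ] (ε (τ+1)) := by
      have := hε_pred (τ+1) (Nat.le_add_left 1 τ)
      simpa using this
    have hMsm : StronglyMeasurable[ℱ τ] M := by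
      refine Real.continuous_exp.comp_stronglyMeasurable ?_
      refine Finset.stronglyMeasurable_fun_sum _ (fun i hi => ?_)
      obtain ⟨hi1, hi2⟩ := Finset.mem_Icc.mp hi
      exact (((hY_adapted i hi1).mono (ℱ.mono hi2)).const_mul lam).sub
        (((hε_pred i hi1).mono (ℱ.mono ((Nat.sub_le i 1).trans hi2))).const_mul _)
    have hgsm : StronglyMeasurable[ℱ τ] g :=
      hMsm.mul (Real.continuous_exp.comp_stronglyMeasurable (hε1.const_mul _).neg)
    have hg0 : ∀ ω, 0 ≤ g ω := fun ω =>
      mul_nonneg (Real.exp_nonneg _) (Real.exp_nonneg _)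
    have hgle : ∀ ω, g ω ≤ M ω := by
      intro ω
      have h1 : Real.exp (-(lam ^ 2 * σ ^ 2 / 2 * ε (τ+1) ω)) ≤ 1 := by
        rw [Real.exp_le_one_iff]
        have := hε_nonneg (τ+1) (Nat.le_add_left 1 τ) ω
        exact neg_nonpos.mpr (mul_nonneg (by positivity) this)
      calc g ω ≤ M ω * 1 := mul_le_mul_of_nonneg_left h1 (Real.exp_nonneg _)
        _ = M ω := mul_one _
    have hgi : Integrable g P := by
      refine IH.1.mono (hgsm.mono (ℱ.le τ)).aestronglyMeasurable ?_
      filter_upwards with ω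
      rw [Real.norm_of_nonneg (hg0 ω), Real.norm_of_nonneg (Real.exp_nonneg _)]
      exact hgle ω
    have hfsm : StronglyMeasurable[m0] f :=
      Real.continuous_exp.comp_stronglyMeasurable
        (((hY_adapted (τ+1) (Nat.le_add_left 1 τ)).mono (ℱ.le _)).const_mul lam)
    have hfi : Integrable f P := hint lam hlam (τ+1) (Nat.le_add_left 1 τ)
    have hcond : ∀ᵐ ω ∂P, (P[f|ℱ τ]) ω ≤ h ω := by
      have := hmgf lam hlam (τ+1) (Nat.le_add_left 1 τ)
      simpa using this
    have hgh : ∀ ω, g ω * h ω = M ω := by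
      intro ω
      rw [hg_def, hh_def, mul_assoc, ← Real.exp_add]
      ring_nf
      rw [Real.exp_zero, mul_one]
    have hghi : Integrable (fun ω => g ω * h ω) P := by
      have : (fun ω => g ω * h ω) = M := funext hgh
      rw [this]; exact IH.1
    obtain ⟨hi2, hle2⟩ := pullout_bound P (ℱ.le τ) hgsm hg0 hgi hfsm
      (fun ω => Real.exp_nonneg _) hfi (fun ω => Real.exp_nonneg _) hcond hghi
    have hsplit : (fun ω => Real.exp (∑ i ∈ Finset.Icc 1 (τ+1),
        (lam * Y i ω - lam ^ 2 * σ ^ 2 / 2 * ε i ω))) = fun ω => g ω * f ω := by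
      funext ω
      rw [Finset.sum_Icc_succ_top (Nat.succ_le_succ (Nat.zero_le τ))]
      rw [show (∑ i ∈ Finset.Icc 1 τ, (lam * Y i ω - lam ^ 2 * σ ^ 2 / 2 * ε i ω))
          + (lam * Y (τ+1) ω - lam ^ 2 * σ ^ 2 / 2 * ε (τ+1) ω)
        = ((∑ i ∈ Finset.Icc 1 τ, (lam * Y i ω - lam ^ 2 * σ ^ 2 / 2 * ε i ω))
          + -(lam ^ 2 * σ ^ 2 / 2 * ε (τ+1) ω)) + lam * Y (τ+1) ω by ring]
      rw [Real.exp_add, Real.exp_add]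
    constructor
    · rw [hsplit]; exact hi2
    · rw [hsplit]
      calc ∫ ω, g ω * f ω ∂P ≤ ∫ ω, g ω * h ω ∂P := hle2
        _ = ∫ ω, M ω ∂P := integral_congr_ae (Filter.Eventually.of_forall hgh)
        _ ≤ 1 := IH.2


lemma key_alg (σ ζ θ κ : ℝ) (hσ : 0 < σ) (hζ : 1 < ζ) (hθ : 0 < θ)
    (hκ : κ = 1 / (σ ^ 2 * (ζ ^ ((1 : ℝ) / 4) + ζ ^ (-(1 : ℝ) / 4)) ^ 2))
    (l : ℕ) (hl : 1 ≤ l) (Zv Nv : ℝ)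
    (hZN : Real.sqrt (θ * Nv) ≤ Zv) (hN1 : ζ ^ (l - 1) ≤ Nv) (hN2 : Nv ≤ ζ ^ l) :
    2 * κ * θ ≤
      (2 * Real.sqrt θ / (σ ^ 2 * Real.sqrt (ζ ^ (l - 1)) * (1 + (ζ ^ ((1:ℝ)/4)) ^ 2))) * Zv
      - (2 * Real.sqrt θ / (σ ^ 2 * Real.sqrt (ζ ^ (l - 1)) * (1 + (ζ ^ ((1:ℝ)/4)) ^ 2))) ^ 2
          * σ ^ 2 / 2 * Nv := by
  have hζ0 : (0:ℝ) < ζ := lt_trans one_pos hζ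
  set p : ℝ := ζ ^ ((1:ℝ)/4) with hp_def
  have hp : 0 < p := Real.rpow_pos_of_pos hζ0 _
  have hpneg : ζ ^ (-(1:ℝ)/4) = p⁻¹ := by
    rw [neg_div, Real.rpow_neg hζ0.le]
  set u₁ : ℝ := Real.sqrt (ζ ^ (l - 1)) with hu1_def
  have ha0 : (0:ℝ) < ζ ^ (l - 1) := pow_pos hζ0 _
  have hu₁ : 0 < u₁ := Real.sqrt_pos.mpr ha0
  set s : ℝ := Real.sqrt θ with hs_def
  have hs : 0 < s := Real.sqrt_pos.mpr hθ
  have hθs : θ = s ^ 2 := (Real.sq_sqrt hθ.le).symm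
  set u : ℝ := Real.sqrt Nv with hu_def
  have hNv0 : 0 < Nv := lt_of_lt_of_le ha0 hN1
  have hNu : Nv = u ^ 2 := (Real.sq_sqrt hNv0.le).symm
  have hu_lb : u₁ ≤ u := Real.sqrt_le_sqrt hN1
  have hsqζ : Real.sqrt ζ = p ^ 2 := by
    rw [Real.sqrt_eq_rpow, hp_def, ← Real.rpow_natCast (ζ ^ ((1:ℝ)/4)) 2,
      ← Real.rpow_mul hζ0.le]
    norm_num
  have hu_ub : u ≤ p ^ 2 * u₁ := by
    have h1 : ζ ^ l = ζ ^ (l - 1) * ζ := by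
      rw [← pow_succ]
      congr 1
      omega
    have h2 : Real.sqrt (ζ ^ l) = u₁ * Real.sqrt ζ := by
      rw [h1, Real.sqrt_mul (pow_nonneg hζ0.le _)]
    calc u ≤ Real.sqrt (ζ ^ l) := Real.sqrt_le_sqrt hN2
      _ = u₁ * p ^ 2 := by rw [h2, hsqζ]
      _ = p ^ 2 * u₁ := mul_comm _ _
  set lam : ℝ := 2 * s / (σ ^ 2 * u₁ * (1 + p ^ 2)) with hlam_def
  have hlam : 0 < lam := by positivity
  have hZ' : s * u ≤ Zv := by
    calc s * u = Real.sqrt (θ * Nv) := (Real.sqrt_mul hθ.le _).symm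
      _ ≤ Zv := hZN
  have hid : lam * (s * u) - lam ^ 2 * σ ^ 2 * u ^ 2 / 2 - 2 * κ * θ
      = lam ^ 2 * σ ^ 2 / 2 * (u - u₁) * (p ^ 2 * u₁ - u) := by
    rw [hκ, hpneg, hθs, hlam_def]
    have hσ' : σ ≠ 0 := ne_of_gt hσ
    have hu₁' : u₁ ≠ 0 := ne_of_gt hu₁
    have hp' : p ≠ 0 := ne_of_gt hp
    have h1p : (1 + p ^ 2) ≠ 0 := by positivity
    field_simp
    ring
  have hrhs : 0 ≤ lam ^ 2 * σ ^ 2 / 2 * (u - u₁) * (p ^ 2 * u₁ - u) := by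
    apply mul_nonneg (mul_nonneg (by positivity) (by linarith)) (by linarith)
  have h3 : 2 * κ * θ ≤ lam * (s * u) - lam ^ 2 * σ ^ 2 * u ^ 2 / 2 := by linarith [hid ▸ hrhs]
  calc 2 * κ * θ ≤ lam * (s * u) - lam ^ 2 * σ ^ 2 * u ^ 2 / 2 := h3
    _ ≤ lam * Zv - lam ^ 2 * σ ^ 2 / 2 * Nv := by
        rw [hNu]
        have := mul_le_mul_of_nonneg_left hZ' hlam.le
        linarith


lemma exists_peel (ζ : ℝ) (hζ : 1 < ζ) (L : ℕ) (hL : 1 ≤ L) (x : ℝ)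
    (hx1 : 1 ≤ x) (hxL : x ≤ ζ ^ L) :
    ∃ l, 1 ≤ l ∧ l ≤ L ∧ ζ ^ (l - 1) ≤ x ∧ x ≤ ζ ^ l := by
  classical
  have hex : ∃ l, x ≤ ζ ^ l := ⟨L, hxL⟩
  set l₀ := Nat.find hex with hl₀_def
  have hle : x ≤ ζ ^ l₀ := Nat.find_spec hex
  have hl₀L : l₀ ≤ L := Nat.find_min' hex hxL
  rcases Nat.eq_zero_or_pos l₀ with h0 | h0
  · refine ⟨1, le_refl 1, hL, ?_, ?_⟩
    · simpa using hx1
    · rw [h0] at hle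
      simp only [pow_zero] at hle
      calc x ≤ 1 := hle
        _ ≤ ζ ^ 1 := by rw [pow_one]; exact hζ.le
  · refine ⟨l₀, h0, hl₀L, ?_, hle⟩
    have := Nat.find_min hex (m := l₀ - 1) (by omega)
    push_neg at this
    exact this.le


open MeasureTheory

set_option maxHeartbeats 1000000 in
/-- Self-normalized concentration bound from the proof of Lemma 3, obtained by peeling
the random observation count `N_t` over geometric ranges `[ζ^{l−1}, ζ^l]`. -/
theorem self_normalized_peeling_bound {Ω : Type*} [m0 : MeasurableSpace Ω]
    (P : Measure Ω) [IsProbabilityMeasure P] (ℱ : Filtration ℕ m0)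
    (σ : ℝ) (hσ : 0 < σ)
    (Y ε : ℕ → Ω → ℝ)
    (hY_adapted : ∀ t, 1 ≤ t → StronglyMeasurable[ℱ t] (Y t))
    (hε_pred : ∀ t, 1 ≤ t → StronglyMeasurable[ℱ (t - 1)] (ε t))
    (hε_nonneg : ∀ t, 1 ≤ t → ∀ ω, 0 ≤ ε t ω)
    (hint : ∀ lam : ℝ, 0 < lam → ∀ t, 1 ≤ t →
      Integrable (fun ω => Real.exp (lam * Y t ω)) P)
    (hmgf : ∀ lam : ℝ, 0 < lam → ∀ t, 1 ≤ t → ∀ᵐ ω ∂P,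
      (P[fun ω => Real.exp (lam * Y t ω)|ℱ (t - 1)]) ω ≤
        Real.exp (lam ^ 2 * σ ^ 2 * ε t ω / 2))
    (Z N : ℕ → Ω → ℝ)
    (hZ : ∀ t ω, Z t ω = ∑ τ ∈ Finset.Icc 1 t, Y τ ω)
    (hN : ∀ t ω, N t ω = ∑ τ ∈ Finset.Icc 1 t, ε τ ω)
    (t : ℕ) (ht : 1 ≤ t) (ζ D : ℝ) (hζ : 1 < ζ) (hD : 0 < D)
    (hNt : ∀ᵐ ω ∂P, 1 ≤ N t ω ∧ N t ω ≤ ζ ^ D)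
    (κ : ℝ)
    (hκ : κ = 1 / (σ ^ 2 * (ζ ^ ((1 : ℝ) / 4) + ζ ^ (-(1 : ℝ) / 4)) ^ 2)) :
    ∀ θ : ℝ, 0 < θ →
      P {ω | Z t ω ≥ Real.sqrt (θ * N t ω)} ≤
        ENNReal.ofReal ((⌈D⌉₊ : ℝ) * Real.exp (-2 * κ * θ)) := by
  intro θ hθ
  have hζ0 : (0:ℝ) < ζ := lt_trans one_pos hζ
  set L := ⌈D⌉₊ with hL_def
  have hL1 : 1 ≤ L := Nat.ceil_pos.mpr hD
  set A : ℕ → Set Ω := fun l =>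
    {ω | Real.sqrt (θ * N t ω) ≤ Z t ω ∧ ζ ^ (l - 1) ≤ N t ω ∧ N t ω ≤ ζ ^ l} with hA_def
  have hAl : ∀ l, 1 ≤ l → P (A l) ≤ ENNReal.ofReal (Real.exp (-(2 * κ * θ))) := by
    intro l hl
    set lam : ℝ := 2 * Real.sqrt θ /
      (σ ^ 2 * Real.sqrt (ζ ^ (l - 1)) * (1 + (ζ ^ ((1:ℝ)/4)) ^ 2)) with hlam_def
    have hlam : 0 < lam := by
      have h1 := Real.sqrt_pos.mpr hθ
      have h2 : 0 < Real.sqrt (ζ ^ (l - 1)) := Real.sqrt_pos.mpr (pow_pos hζ0 _)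
      have h3 : 0 < ζ ^ ((1:ℝ)/4) := Real.rpow_pos_of_pos hζ0 _
      positivity
    obtain ⟨hMi, hM1⟩ := supermart_bound P ℱ σ Y ε hY_adapted hε_pred hε_nonneg
      hint hmgf lam hlam t
    set M : Ω → ℝ := fun ω => Real.exp (∑ i ∈ Finset.Icc 1 t,
      (lam * Y i ω - lam ^ 2 * σ ^ 2 / 2 * ε i ω)) with hM_def
    have hMZ : ∀ ω, M ω = Real.exp (lam * Z t ω - lam ^ 2 * σ ^ 2 / 2 * N t ω) := by
      intro ω
      simp only [hM_def]
      rw [hZ, hN, Finset.mul_sum, Finset.mul_sum, ← Finset.sum_sub_distrib]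
    have hsub : A l ⊆ {ω | ENNReal.ofReal (Real.exp (2 * κ * θ)) ≤ ENNReal.ofReal (M ω)} := by
      rintro ω ⟨h1, h2, h3⟩
      have hkey := key_alg σ ζ θ κ hσ hζ hθ hκ l hl (Z t ω) (N t ω) h1 h2 h3
      refine ENNReal.ofReal_le_ofReal ?_
      rw [hMZ ω]
      apply Real.exp_le_exp.mpr
      rw [hlam_def]
      exact hkey
    have markov := mul_meas_ge_le_lintegral₀
      (hMi.aestronglyMeasurable.aemeasurable.ennreal_ofReal)
      (ENNReal.ofReal (Real.exp (2 * κ * θ)))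
    have hlint : ∫⁻ ω, ENNReal.ofReal (M ω) ∂P ≤ 1 := by
      rw [← ofReal_integral_eq_lintegral_ofReal hMi
        (Filter.Eventually.of_forall fun ω => Real.exp_nonneg _)]
      calc ENNReal.ofReal (∫ ω, M ω ∂P) ≤ ENNReal.ofReal 1 := ENNReal.ofReal_le_ofReal hM1
        _ = 1 := ENNReal.ofReal_one
    have h1 : ENNReal.ofReal (Real.exp (2 * κ * θ)) * P (A l) ≤ 1 := by
      calc ENNReal.ofReal (Real.exp (2 * κ * θ)) * P (A l)
          ≤ ENNReal.ofReal (Real.exp (2 * κ * θ)) *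
            P {ω | ENNReal.ofReal (Real.exp (2 * κ * θ)) ≤ ENNReal.ofReal (M ω)} :=
            mul_le_mul_right (measure_mono hsub) _
        _ ≤ ∫⁻ ω, ENNReal.ofReal (M ω) ∂P := markov
        _ ≤ 1 := hlint
    calc P (A l)
        = (ENNReal.ofReal (Real.exp (-(2 * κ * θ))) * ENNReal.ofReal (Real.exp (2 * κ * θ)))
            * P (A l) := by
          rw [← ENNReal.ofReal_mul (Real.exp_nonneg _), ← Real.exp_add, neg_add_cancel,
            Real.exp_zero, ENNReal.ofReal_one, one_mul]
      _ = ENNReal.ofReal (Real.exp (-(2 * κ * θ))) *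
            (ENNReal.ofReal (Real.exp (2 * κ * θ)) * P (A l)) := mul_assoc _ _ _
      _ ≤ ENNReal.ofReal (Real.exp (-(2 * κ * θ))) * 1 := mul_le_mul_right h1 _
      _ = ENNReal.ofReal (Real.exp (-(2 * κ * θ))) := mul_one _
  have hcover : {ω | Z t ω ≥ Real.sqrt (θ * N t ω)} ≤ᵐ[P] ⋃ l ∈ Finset.Icc 1 L, A l := by
    filter_upwards [hNt] with ω hω
    intro hmem
    obtain ⟨h1, h2⟩ := hω
    have hxL : N t ω ≤ ζ ^ L := by
      calc N t ω ≤ ζ ^ D := h2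
        _ ≤ ζ ^ (L : ℝ) := Real.rpow_le_rpow_of_exponent_le hζ.le (Nat.le_ceil D)
        _ = ζ ^ L := Real.rpow_natCast ζ L
    obtain ⟨l, hl1, hlL, ha, hb⟩ := exists_peel ζ hζ L hL1 (N t ω) h1 hxL
    exact Set.mem_biUnion (Finset.mem_Icc.mpr ⟨hl1, hlL⟩) ⟨hmem, ha, hb⟩
  calc P {ω | Z t ω ≥ Real.sqrt (θ * N t ω)}
      ≤ P (⋃ l ∈ Finset.Icc 1 L, A l) := measure_mono_ae hcover
    _ ≤ ∑ l ∈ Finset.Icc 1 L, P (A l) := measure_biUnion_finset_le _ _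
    _ ≤ ∑ l ∈ Finset.Icc 1 L, ENNReal.ofReal (Real.exp (-(2 * κ * θ))) :=
        Finset.sum_le_sum fun l hl => hAl l (Finset.mem_Icc.mp hl).1
    _ = L * ENNReal.ofReal (Real.exp (-(2 * κ * θ))) := by
        rw [Finset.sum_const, Nat.card_Icc, Nat.add_sub_cancel, nsmul_eq_mul]
    _ = ENNReal.ofReal ((L : ℝ) * Real.exp (-2 * κ * θ)) := by
        rw [show (-2 * κ * θ) = -(2 * κ * θ) by ring,
          ENNReal.ofReal_mul (Nat.cast_nonneg L), ENNReal.ofReal_natCast]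
end

section
/- Let (Ω, F, P) be a probability space with a filtration (F_t)_{t∈ℕ} and let σ > 0, ξ > 0, ζ > 1, and let d ≥ 0 be an integer. Let (Y_t)_{t≥1} be a real-valued adapted process and (ε_t)_{t≥1} a nonnegative predictable process, and assume that for every λ > 0 and every t ≥ 1, exp(λ·Y_t) is integrable and E[exp(λ·Y_t) | F_{t−1}] ≤ exp(λ²σ²·ε_t/2) almost surely. Set Z_t = Σ_{τ=1}^{t} Y_τ and N_t = Σ_{τ=1}^{t} ε_τ, and fix an integer t ≥ 2 such that 1 ≤ N_t ≤ (d+1)·t almost surely. Then P(Z_t ≥ √(2(ξ+1)σ²·ln t · N_t)) ≤ ⌈ln((d+1)·t)/ln ζ⌉ · t^{−(ξ+1)(1−(ζ−1)²/16)}. -/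
open MeasureTheory

lemma exp_supermartingale_bound {Ω : Type*} [m0 : MeasurableSpace Ω]
    (P : Measure Ω) [IsProbabilityMeasure P] (ℱ : Filtration ℕ m0)
    (σ : ℝ) (Y ε : ℕ → Ω → ℝ)
    (hY_adapted : ∀ t, 1 ≤ t → StronglyMeasurable[ℱ t] (Y t))
    (hε_pred : ∀ t, 1 ≤ t → StronglyMeasurable[ℱ (t - 1)] (ε t))
    (hε_nonneg : ∀ t, 1 ≤ t → ∀ ω, 0 ≤ ε t ω)
    (hint : ∀ lam : ℝ, 0 < lam → ∀ t, 1 ≤ t →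
      Integrable (fun ω => Real.exp (lam * Y t ω)) P)
    (hmgf : ∀ lam : ℝ, 0 < lam → ∀ t, 1 ≤ t → ∀ᵐ ω ∂P,
      (P[fun ω => Real.exp (lam * Y t ω)|ℱ (t - 1)]) ω ≤
        Real.exp (lam ^ 2 * σ ^ 2 * ε t ω / 2))
    (lam : ℝ) (hlam : 0 < lam) :
    ∀ s : ℕ, ∫⁻ ω, ENNReal.ofReal (Real.exp (lam * ∑ τ ∈ Finset.Icc 1 s, Y τ ω
      - lam ^ 2 * σ ^ 2 / 2 * ∑ τ ∈ Finset.Icc 1 s, ε τ ω)) ∂P ≤ 1 := by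
  intro s
  induction s with
  | zero =>
      simp [Finset.Icc_eq_empty_of_lt (by norm_num : (0:ℕ) < 1)]
  | succ s ih =>
      have h1s : (1:ℕ) ≤ s + 1 := by omega
      set Ms : Ω → ℝ := fun ω => Real.exp (lam * ∑ τ ∈ Finset.Icc 1 s, Y τ ω
        - lam ^ 2 * σ ^ 2 / 2 * ∑ τ ∈ Finset.Icc 1 s, ε τ ω) with hMs_def
      set g : Ω → ℝ := fun ω =>
        Real.exp (lam * Y (s+1) ω - lam ^ 2 * σ ^ 2 / 2 * ε (s+1) ω) with hg_def
      have hg_pos : ∀ ω, 0 < g ω := fun ω => Real.exp_pos _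
      have hsplit : ∀ ω, Real.exp (lam * ∑ τ ∈ Finset.Icc 1 (s+1), Y τ ω
          - lam ^ 2 * σ ^ 2 / 2 * ∑ τ ∈ Finset.Icc 1 (s+1), ε τ ω) = Ms ω * g ω := by
        intro ω
        rw [Finset.sum_Icc_succ_top h1s, Finset.sum_Icc_succ_top h1s, hMs_def, hg_def,
          ← Real.exp_add]
        ring_nf
      -- measurability
      have hMs_meas : StronglyMeasurable[ℱ s] Ms := by
        apply Continuous.comp_stronglyMeasurable Real.continuous_exp
        apply StronglyMeasurable.sub
        · exact stronglyMeasurable_const.mul (Finset.stronglyMeasurable_fun_sum _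
            fun τ hτ => (hY_adapted τ (Finset.mem_Icc.1 hτ).1).mono
              (ℱ.mono (Finset.mem_Icc.1 hτ).2))
        · refine stronglyMeasurable_const.mul (Finset.stronglyMeasurable_fun_sum _
            fun τ hτ => (hε_pred τ (Finset.mem_Icc.1 hτ).1).mono (ℱ.mono ?_))
          have := (Finset.mem_Icc.1 hτ).2
          omega
      have hε1 : StronglyMeasurable[ℱ s] (ε (s+1)) := by
        simpa using hε_pred (s+1) h1s
      have hY1 : StronglyMeasurable (Y (s+1)) := (hY_adapted (s+1) h1s).mono (ℱ.le _)
      have hg_meas : StronglyMeasurable g :=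
        Real.continuous_exp.comp_stronglyMeasurable
          ((stronglyMeasurable_const.mul hY1).sub
            (stronglyMeasurable_const.mul (hε1.mono (ℱ.le s))))
      have hexpY_int : Integrable (fun ω => Real.exp (lam * Y (s+1) ω)) P :=
        hint lam hlam (s+1) h1s
      have hg_int : Integrable g P := by
        refine hexpY_int.mono' hg_meas.aestronglyMeasurable (Filter.Eventually.of_forall ?_)
        intro ω
        rw [Real.norm_eq_abs, abs_of_pos (hg_pos ω)]
        apply Real.exp_le_exp.2
        have h0 : 0 ≤ ε (s+1) ω := hε_nonneg (s+1) h1s ω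
        nlinarith [sq_nonneg lam, sq_nonneg σ, sq_nonneg (lam * σ)]
      -- conditional expectation of g is at most 1
      have hfac : g = (fun ω => Real.exp (-(lam ^ 2 * σ ^ 2 / 2) * ε (s+1) ω)) *
          (fun ω => Real.exp (lam * Y (s+1) ω)) := by
        funext ω
        simp only [Pi.mul_apply, ← Real.exp_add, hg_def]
        ring_nf
      have hf0_meas : StronglyMeasurable[ℱ s]
          (fun ω => Real.exp (-(lam ^ 2 * σ ^ 2 / 2) * ε (s+1) ω)) :=
        Real.continuous_exp.comp_stronglyMeasurable (stronglyMeasurable_const.mul hε1)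
      have hf0_bdd : ∀ ω, ‖Real.exp (-(lam ^ 2 * σ ^ 2 / 2) * ε (s+1) ω)‖ ≤ 1 := by
        intro ω
        rw [Real.norm_eq_abs, abs_of_pos (Real.exp_pos _)]
        rw [show (1:ℝ) = Real.exp 0 by simp]
        apply Real.exp_le_exp.2
        have h0 : 0 ≤ ε (s+1) ω := hε_nonneg (s+1) h1s ω
        nlinarith [sq_nonneg (lam * σ)]
      have hpull := condExp_stronglyMeasurable_mul_of_bound (ℱ.le s) hf0_meas hexpY_int 1
        (Filter.Eventually.of_forall hf0_bdd)
      have hmgf' := hmgf lam hlam (s+1) h1s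
      simp only [Nat.add_sub_cancel] at hmgf'
      have hcond : (P[g|ℱ s]) ≤ᵐ[P] fun _ => (1:ℝ) := by
        rw [hfac]
        filter_upwards [hpull, hmgf'] with ω h1 h2
        rw [h1]
        simp only [Pi.mul_apply]
        calc Real.exp (-(lam ^ 2 * σ ^ 2 / 2) * ε (s+1) ω) *
              (P[fun ω => Real.exp (lam * Y (s+1) ω)|ℱ s]) ω
            ≤ Real.exp (-(lam ^ 2 * σ ^ 2 / 2) * ε (s+1) ω) *
              Real.exp (lam ^ 2 * σ ^ 2 * ε (s+1) ω / 2) :=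
              mul_le_mul_of_nonneg_left h2 (Real.exp_pos _).le
          _ = 1 := by rw [← Real.exp_add]; ring_nf; exact Real.exp_zero
      -- truncated key bound
      have key : ∀ n : ℕ, Integrable (fun ω => min (Ms ω) (n:ℝ) * g ω) P ∧
          ∫ ω, min (Ms ω) (n:ℝ) * g ω ∂P ≤ 1 := by
        intro n
        set f : Ω → ℝ := fun ω => min (Ms ω) (n:ℝ) with hf_def
        have hf_meas : StronglyMeasurable[ℱ s] f :=
          (hMs_meas.measurable.min measurable_const).stronglyMeasurable
        have hf_nonneg : ∀ ω, 0 ≤ f ω := fun ω =>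
          le_min (Real.exp_pos _).le (Nat.cast_nonneg n)
        have hf_bdd : ∀ ω, ‖f ω‖ ≤ (n:ℝ) := fun ω => by
          rw [Real.norm_eq_abs, abs_of_nonneg (hf_nonneg ω)]; exact min_le_right _ _
        have hf_int : Integrable f P :=
          (integrable_const ((n:ℕ):ℝ)).mono'
            ((hf_meas.mono (ℱ.le s)).aestronglyMeasurable)
            (Filter.Eventually.of_forall hf_bdd)
        have hfg_int : Integrable (fun ω => f ω * g ω) P :=
          hg_int.bdd_mul ((hf_meas.mono (ℱ.le s)).aestronglyMeasurable)
            (Filter.Eventually.of_forall hf_bdd)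
        refine ⟨hfg_int, ?_⟩
        have hpull2 := condExp_stronglyMeasurable_mul_of_bound (ℱ.le s) hf_meas hg_int (n:ℝ)
          (Filter.Eventually.of_forall hf_bdd)
        have h1 : ∫ ω, f ω * g ω ∂P = ∫ ω, (P[f * g|ℱ s]) ω ∂P :=
          (integral_condExp (ℱ.le s)).symm
        have h2eq : (P[f * g|ℱ s]) =ᵐ[P] fun ω => f ω * (P[g|ℱ s]) ω := by
          filter_upwards [hpull2] with ω hω
          simpa using hω
        have hfg_cond_int : Integrable (fun ω => f ω * (P[g|ℱ s]) ω) P :=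
          integrable_condExp.congr h2eq
        have h3 : ∫ ω, f ω * (P[g|ℱ s]) ω ∂P ≤ ∫ ω, f ω ∂P := by
          refine integral_mono_ae hfg_cond_int hf_int ?_
          filter_upwards [hcond] with ω hω
          calc f ω * (P[g|ℱ s]) ω ≤ f ω * 1 := mul_le_mul_of_nonneg_left hω (hf_nonneg ω)
            _ = f ω := mul_one _
        have h4 : ∫ ω, f ω ∂P ≤ 1 := by
          have heq := ofReal_integral_eq_lintegral_ofReal hf_int
            (Filter.Eventually.of_forall hf_nonneg)
          have hle : ∫⁻ ω, ENNReal.ofReal (f ω) ∂P ≤ 1 :=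
            le_trans (lintegral_mono fun ω =>
              ENNReal.ofReal_le_ofReal (min_le_left _ _)) ih
          rw [← heq] at hle
          exact ENNReal.ofReal_le_one.1 hle
        calc ∫ ω, f ω * g ω ∂P = ∫ ω, (P[f * g|ℱ s]) ω ∂P := h1
          _ = ∫ ω, f ω * (P[g|ℱ s]) ω ∂P := integral_congr_ae h2eq
          _ ≤ ∫ ω, f ω ∂P := h3
          _ ≤ 1 := h4
      -- monotone convergence
      have hMs_m : Measurable Ms := (hMs_meas.mono (ℱ.le s)).measurable
      have hg_m : Measurable g := hg_meas.measurable
      calc ∫⁻ ω, ENNReal.ofReal (Real.exp (lam * ∑ τ ∈ Finset.Icc 1 (s+1), Y τ ω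
            - lam ^ 2 * σ ^ 2 / 2 * ∑ τ ∈ Finset.Icc 1 (s+1), ε τ ω)) ∂P
          = ∫⁻ ω, ⨆ n : ℕ, ENNReal.ofReal (min (Ms ω) (n:ℝ) * g ω) ∂P := by
            refine lintegral_congr fun ω => ?_
            rw [hsplit ω]
            apply le_antisymm
            · have hmin : min (Ms ω) ((⌈Ms ω⌉₊:ℕ):ℝ) = Ms ω := min_eq_left (Nat.le_ceil _)
              exact le_iSup_of_le ⌈Ms ω⌉₊ (by rw [hmin])
            · exact iSup_le fun n => ENNReal.ofReal_le_ofReal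
                (mul_le_mul_of_nonneg_right (min_le_left _ _) (hg_pos ω).le)
        _ = ⨆ n : ℕ, ∫⁻ ω, ENNReal.ofReal (min (Ms ω) (n:ℝ) * g ω) ∂P := by
            refine lintegral_iSup (fun n => ?_) (fun n m hnm ω => ?_)
            · exact ((hMs_m.min measurable_const).mul hg_m).ennreal_ofReal
            · exact ENNReal.ofReal_le_ofReal (mul_le_mul_of_nonneg_right
                (min_le_min le_rfl (Nat.cast_le.2 hnm)) (hg_pos ω).le)
        _ ≤ 1 := by
            refine iSup_le fun n => ?_
            have hnn : (0:Ω → ℝ) ≤ᵐ[P] fun ω => min (Ms ω) (n:ℝ) * g ω := by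
              filter_upwards with ω
              show (0:ℝ) ≤ min (Ms ω) (n:ℝ) * g ω
              exact mul_nonneg (le_min (Real.exp_pos _).le (Nat.cast_nonneg n)) (hg_pos ω).le
            rw [← ofReal_integral_eq_lintegral_ofReal (key n).1 hnn]
            exact ENNReal.ofReal_le_one.2 (key n).2
lemma chernoff_quadratic (σ v r s u : ℝ) (hσ : 0 < σ) (hr : 0 < r) (hs : 0 < s + 1)
    (hru : r ≤ u) (hus : u ≤ s * r) :
    2 * v ^ 2 * s / (σ ^ 2 * (s + 1) ^ 2) ≤
      2 * v / (σ ^ 2 * r * (s + 1)) * (v * u)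
        - (2 * v / (σ ^ 2 * r * (s + 1))) ^ 2 * σ ^ 2 / 2 * u ^ 2 := by
  have hfactor : 2 * v / (σ ^ 2 * r * (s + 1)) * (v * u)
      - (2 * v / (σ ^ 2 * r * (s + 1))) ^ 2 * σ ^ 2 / 2 * u ^ 2
      - 2 * v ^ 2 * s / (σ ^ 2 * (s + 1) ^ 2)
      = 2 * v ^ 2 / (σ ^ 2 * r ^ 2 * (s + 1) ^ 2) * ((u - r) * (s * r - u)) := by
    field_simp
    ring
  have h2 : 0 ≤ 2 * v ^ 2 / (σ ^ 2 * r ^ 2 * (s + 1) ^ 2) * ((u - r) * (s * r - u)) :=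
    mul_nonneg (by positivity) (mul_nonneg (by linarith) (by linarith))
  linarith

set_option maxHeartbeats 1000000 in
/-- One-sided form of the tail probability bound of Lemma 3. -/
theorem one_sided_tail_bound {Ω : Type*} [m0 : MeasurableSpace Ω]
    (P : Measure Ω) [IsProbabilityMeasure P] (ℱ : Filtration ℕ m0)
    (σ ξ ζ : ℝ) (hσ : 0 < σ) (hξ : 0 < ξ) (hζ : 1 < ζ) (d : ℕ)
    (Y ε : ℕ → Ω → ℝ)
    (hY_adapted : ∀ t, 1 ≤ t → StronglyMeasurable[ℱ t] (Y t))
    (hε_pred : ∀ t, 1 ≤ t → StronglyMeasurable[ℱ (t - 1)] (ε t))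
    (hε_nonneg : ∀ t, 1 ≤ t → ∀ ω, 0 ≤ ε t ω)
    (hint : ∀ lam : ℝ, 0 < lam → ∀ t, 1 ≤ t →
      Integrable (fun ω => Real.exp (lam * Y t ω)) P)
    (hmgf : ∀ lam : ℝ, 0 < lam → ∀ t, 1 ≤ t → ∀ᵐ ω ∂P,
      (P[fun ω => Real.exp (lam * Y t ω)|ℱ (t - 1)]) ω ≤
        Real.exp (lam ^ 2 * σ ^ 2 * ε t ω / 2))
    (Z N : ℕ → Ω → ℝ)
    (hZ : ∀ t ω, Z t ω = ∑ τ ∈ Finset.Icc 1 t, Y τ ω)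
    (hN : ∀ t ω, N t ω = ∑ τ ∈ Finset.Icc 1 t, ε τ ω)
    (t : ℕ) (ht : 2 ≤ t)
    (hNt : ∀ᵐ ω ∂P, 1 ≤ N t ω ∧ N t ω ≤ ((d : ℝ) + 1) * t) :
    P {ω | Z t ω ≥ Real.sqrt (2 * (ξ + 1) * σ ^ 2 * Real.log t * N t ω)} ≤
      ENNReal.ofReal ((⌈Real.log (((d : ℝ) + 1) * t) / Real.log ζ⌉₊ : ℝ) *
        (t : ℝ) ^ (-(ξ + 1) * (1 - (ζ - 1) ^ 2 / 16))) := by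
  classical
  have ht1 : (1:ℝ) < t := by exact_mod_cast (by omega : 1 < t)
  have hlogt : 0 < Real.log t := Real.log_pos ht1
  have hζ0 : (0:ℝ) < ζ := lt_trans one_pos hζ
  have hξ1 : (0:ℝ) < ξ + 1 := by linarith
  set s := Real.sqrt ζ with hs_def
  have hs1 : 1 < s := by
    rw [hs_def, show (1:ℝ) = Real.sqrt 1 by simp]
    exact Real.sqrt_lt_sqrt (by norm_num) hζ
  have hs0 : (0:ℝ) < s + 1 := by linarith
  have hsζ : s ^ 2 = ζ := Real.sq_sqrt hζ0.le
  set θ := 2 * (ξ + 1) * σ ^ 2 * Real.log (t:ℝ) with hθ_def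
  have hθpos : 0 < θ := by
    rw [hθ_def]
    exact mul_pos (mul_pos (mul_pos two_pos hξ1) (pow_pos hσ 2)) hlogt
  set v := Real.sqrt θ with hv_def
  have hv2 : v ^ 2 = θ := Real.sq_sqrt hθpos.le
  have hvpos : 0 < v := Real.sqrt_pos.2 hθpos
  set c := 2 * v ^ 2 * s / (σ ^ 2 * (s + 1) ^ 2) with hc_def
  set K := ⌈Real.log (((d : ℝ) + 1) * t) / Real.log ζ⌉₊ with hK_def
  have hlogζ : 0 < Real.log ζ := Real.log_pos hζ
  have hdt1 : (1:ℝ) < ((d:ℝ) + 1) * t := by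
    have h1 : (1:ℝ) ≤ (d:ℝ) + 1 := by linarith [Nat.cast_nonneg (α := ℝ) d]
    nlinarith
  have hK1 : 1 ≤ K := Nat.ceil_pos.2 (div_pos (Real.log_pos hdt1) hlogζ)
  have hζK : ((d:ℝ) + 1) * t ≤ ζ ^ K := by
    have h1 : Real.log (((d:ℝ) + 1) * t) / Real.log ζ ≤ (K:ℝ) := Nat.le_ceil _
    have h2 : Real.log (((d:ℝ) + 1) * t) ≤ (K:ℝ) * Real.log ζ := (div_le_iff₀ hlogζ).1 h1
    calc ((d:ℝ) + 1) * t = Real.exp (Real.log (((d:ℝ) + 1) * t)) :=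
          (Real.exp_log (by linarith)).symm
      _ ≤ Real.exp ((K:ℝ) * Real.log ζ) := Real.exp_le_exp.2 h2
      _ = ζ ^ K := by rw [← Real.log_pow, Real.exp_log (pow_pos hζ0 K)]
  -- measurability of Z t and N t
  have hZm : Measurable (Z t) := by
    have h : Z t = fun ω => ∑ τ ∈ Finset.Icc 1 t, Y τ ω := funext (hZ t)
    rw [h]
    exact Finset.measurable_sum _ fun τ hτ =>
      ((hY_adapted τ (Finset.mem_Icc.1 hτ).1).mono (ℱ.le τ)).measurable
  have hNm : Measurable (N t) := by
    have h : N t = fun ω => ∑ τ ∈ Finset.Icc 1 t, ε τ ω := funext (hN t)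
    rw [h]
    exact Finset.measurable_sum _ fun τ hτ =>
      ((hε_pred τ (Finset.mem_Icc.1 hτ).1).mono (ℱ.le (τ - 1))).measurable
  set A : ℕ → Set Ω := fun k =>
    {ω | Real.sqrt (θ * N t ω) ≤ Z t ω ∧ ζ ^ k ≤ N t ω ∧ N t ω ≤ ζ ^ (k + 1)} with hA_def
  -- per-slice Chernoff bound
  have slice : ∀ k : ℕ, P (A k) ≤ ENNReal.ofReal (Real.exp (-c)) := by
    intro k
    set r := Real.sqrt (ζ ^ k) with hr_def
    have hrpos : 0 < r := Real.sqrt_pos.2 (pow_pos hζ0 k)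
    have hr2 : r ^ 2 = ζ ^ k := Real.sq_sqrt (pow_pos hζ0 k).le
    set lam := 2 * v / (σ ^ 2 * r * (s + 1)) with hlam_def
    have hlampos : 0 < lam := by
      rw [hlam_def]; positivity
    have hsup := exp_supermartingale_bound P ℱ σ Y ε hY_adapted hε_pred hε_nonneg hint hmgf
      lam hlampos t
    have hsup' : ∫⁻ ω, ENNReal.ofReal
        (Real.exp (lam * Z t ω - lam ^ 2 * σ ^ 2 / 2 * N t ω)) ∂P ≤ 1 := by
      simp only [hZ, hN]; exact hsup
    have hsubset : A k ⊆ {ω | ENNReal.ofReal (Real.exp c) ≤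
        ENNReal.ofReal (Real.exp (lam * Z t ω - lam ^ 2 * σ ^ 2 / 2 * N t ω))} := by
      intro ω hω
      obtain ⟨hZge, hNlo, hNhi⟩ := hω
      set u := Real.sqrt (N t ω) with hu_def
      have hN0 : 0 < N t ω := lt_of_lt_of_le (pow_pos hζ0 k) hNlo
      have hu2 : u ^ 2 = N t ω := Real.sq_sqrt hN0.le
      have hru : r ≤ u := Real.sqrt_le_sqrt hNlo
      have hus : u ≤ s * r := by
        have h1 : N t ω ≤ ζ ^ k * ζ := by rw [← pow_succ]; exact hNhi
        calc u ≤ Real.sqrt (ζ ^ k * ζ) := Real.sqrt_le_sqrt h1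
          _ = r * s := Real.sqrt_mul (pow_pos hζ0 k).le ζ
          _ = s * r := mul_comm _ _
      have hZvu : v * u ≤ Z t ω := by
        rw [hv_def, hu_def, ← Real.sqrt_mul hθpos.le]
        exact hZge
      have hkey : c ≤ lam * Z t ω - lam ^ 2 * σ ^ 2 / 2 * N t ω := by
        have hq := chernoff_quadratic σ v r s u hσ hrpos hs0 hru hus
        rw [← hlam_def, ← hc_def] at hq
        have hZZ : lam * (v * u) ≤ lam * Z t ω :=
          mul_le_mul_of_nonneg_left hZvu hlampos.le
        have huN : lam ^ 2 * σ ^ 2 / 2 * u ^ 2 = lam ^ 2 * σ ^ 2 / 2 * N t ω := by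
          rw [hu2]
        linarith
      exact ENNReal.ofReal_le_ofReal (Real.exp_le_exp.2 hkey)
    have hmeas : Measurable (fun ω =>
        ENNReal.ofReal (Real.exp (lam * Z t ω - lam ^ 2 * σ ^ 2 / 2 * N t ω))) := by
      apply Measurable.ennreal_ofReal
      exact (Real.continuous_exp.measurable).comp
        (((measurable_const.mul hZm)).sub ((measurable_const.mul hNm)))
    have hmark := mul_meas_ge_le_lintegral₀ (μ := P) hmeas.aemeasurable (ENNReal.ofReal (Real.exp c))
    have h6 : ENNReal.ofReal (Real.exp c) * P (A k) ≤ 1 :=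
      le_trans (mul_le_mul_right (measure_mono hsubset) _) (le_trans hmark hsup')
    rw [Real.exp_neg, ENNReal.ofReal_inv_of_pos (Real.exp_pos c)]
    exact ENNReal.le_inv_iff_mul_le.2 (by rwa [mul_comm])
  -- coverage
  have hcover : ∀ ω, (1 ≤ N t ω ∧ N t ω ≤ ((d:ℝ) + 1) * t) →
      Real.sqrt (θ * N t ω) ≤ Z t ω → ∃ k, k < K ∧ ω ∈ A k := by
    intro ω hg hZω
    obtain ⟨hN1, hNd⟩ := hg
    have hP0 : ζ ^ 0 ≤ N t ω := by simpa using hN1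
    set k := Nat.findGreatest (fun j => ζ ^ j ≤ N t ω) (K - 1) with hk_def
    have hkle : k ≤ K - 1 := Nat.findGreatest_le (P := fun j => ζ ^ j ≤ N t ω) (K - 1)
    have hkP : ζ ^ k ≤ N t ω :=
      Nat.findGreatest_spec (P := fun j => ζ ^ j ≤ N t ω) (Nat.zero_le _) hP0
    refine ⟨k, by omega, hZω, hkP, ?_⟩
    by_cases hcase : k = K - 1
    · have hKk : k + 1 = K := by omega
      rw [hKk]
      exact le_trans hNd hζK
    · have hlt : ¬ (ζ ^ (k + 1) ≤ N t ω) :=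
        Nat.findGreatest_is_greatest (P := fun j => ζ ^ j ≤ N t ω) (n := K - 1)
          (by rw [← hk_def]; omega) (by omega)
      exact le_of_not_ge hlt
  -- union bound
  have hEsub : {ω | Z t ω ≥ Real.sqrt (θ * N t ω)} ⊆
      (⋃ k ∈ Finset.range K, A k) ∪
        {ω | ¬ (1 ≤ N t ω ∧ N t ω ≤ ((d:ℝ) + 1) * t)} := by
    intro ω hω
    by_cases hg : 1 ≤ N t ω ∧ N t ω ≤ ((d:ℝ) + 1) * t
    · obtain ⟨k, hkK, hA⟩ := hcover ω hg hω
      exact Or.inl (Set.mem_biUnion (Finset.mem_range.2 hkK) hA)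
    · exact Or.inr hg
  have hnull : P {ω | ¬ (1 ≤ N t ω ∧ N t ω ≤ ((d:ℝ) + 1) * t)} = 0 := ae_iff.1 hNt
  have halg : 1 - (ζ - 1) ^ 2 / 16 ≤ 4 * s / (s + 1) ^ 2 := by
    rw [← hsζ, le_div_iff₀ (by positivity : (0:ℝ) < (s + 1) ^ 2)]
    have h2 : (2:ℝ) ≤ s + 1 := by linarith
    have h16 : (16:ℝ) ≤ (s + 1) ^ 4 := by nlinarith
    nlinarith [mul_nonneg (sq_nonneg (s - 1)) (by linarith : (0:ℝ) ≤ (s + 1) ^ 4 - 16)]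
  have hcexp : Real.exp (-c) ≤ (t:ℝ) ^ (-(ξ + 1) * (1 - (ζ - 1) ^ 2 / 16)) := by
    rw [Real.rpow_def_of_pos (by linarith : (0:ℝ) < t)]
    apply Real.exp_le_exp.2
    have hc_eq : c = (ξ + 1) * Real.log t * (4 * s / (s + 1) ^ 2) := by
      rw [hc_def, hv2, hθ_def]
      field_simp
      ring
    rw [hc_eq]
    have hmul := mul_le_mul_of_nonneg_left halg (mul_pos hξ1 hlogt).le
    nlinarith [hmul]
  calc P {ω | Z t ω ≥ Real.sqrt (θ * N t ω)}
      ≤ P ((⋃ k ∈ Finset.range K, A k) ∪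
          {ω | ¬ (1 ≤ N t ω ∧ N t ω ≤ ((d:ℝ) + 1) * t)}) := measure_mono hEsub
    _ ≤ P (⋃ k ∈ Finset.range K, A k) +
          P {ω | ¬ (1 ≤ N t ω ∧ N t ω ≤ ((d:ℝ) + 1) * t)} := measure_union_le _ _
    _ = P (⋃ k ∈ Finset.range K, A k) := by rw [hnull, add_zero]
    _ ≤ ∑ k ∈ Finset.range K, P (A k) := measure_biUnion_finset_le _ _
    _ ≤ ∑ k ∈ Finset.range K, ENNReal.ofReal (Real.exp (-c)) :=
        Finset.sum_le_sum fun k _ => slice k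
    _ = (K : ENNReal) * ENNReal.ofReal (Real.exp (-c)) := by
        rw [Finset.sum_const, Finset.card_range, nsmul_eq_mul]
    _ ≤ ENNReal.ofReal ((K : ℝ) * (t : ℝ) ^ (-(ξ + 1) * (1 - (ζ - 1) ^ 2 / 16))) := by
        rw [← ENNReal.ofReal_natCast K, ← ENNReal.ofReal_mul (Nat.cast_nonneg K)]
        exact ENNReal.ofReal_le_ofReal
          (mul_le_mul_of_nonneg_left hcexp (Nat.cast_nonneg K))
end

section
/- Let (Ω, F, P) be a probability space with a filtration (F_t)_{t∈ℕ} and let σ > 0, ξ > 0, ζ > 1, and let d ≥ 0 be an integer. Let (Y_t)_{t≥1} be a real-valued adapted process and (ε_t)_{t≥1} a nonnegative predictable process, and assume that for every λ ∈ ℝ and every t ≥ 1, exp(λ·Y_t) is integrable and E[exp(λ·Y_t) | F_{t−1}] ≤ exp(λ²σ²·ε_t/2) almost surely. Set Z_t = Σ_{τ=1}^{t} Y_τ and N_t = Σ_{τ=1}^{t} ε_τ, and fix an integer t ≥ 2 such that 1 ≤ N_t ≤ (d+1)·t almost surely. Then P(|Z_t| ≥ √(2(ξ+1)σ²·ln t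 · N_t)) ≤ 2·⌈ln((d+1)·t)/ln ζ⌉ · t^{−(ξ+1)(1−(ζ−1)²/16)}. -/
open MeasureTheory
open scoped ENNReal

lemma aux_truncation_step {Ω : Type*} [m0 : MeasurableSpace Ω]
    (P : Measure Ω) [IsProbabilityMeasure P] {m : MeasurableSpace Ω} (hm : m ≤ m0)
    {g f h : Ω → ℝ}
    (hgm : StronglyMeasurable[m] g) (hg0 : ∀ ω, 0 ≤ g ω)
    (hfm : Measurable[m0] f) (hf : Integrable f P) (hf0 : ∀ ω, 0 ≤ f ω)
    (hhm : Measurable[m0] h) (hh0 : ∀ ω, 0 ≤ h ω)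
    (hgh : Integrable (fun ω => g ω * h ω) P)
    (hcond : ∀ᵐ ω ∂P, (P[f|m]) ω ≤ h ω) :
    ∫⁻ ω, ENNReal.ofReal (g ω * f ω) ∂P ≤ ENNReal.ofReal (∫ ω, g ω * h ω ∂P) := by
  set gn : ℕ → Ω → ℝ := fun n ω => min (g ω) n with hgn_def
  have hgn_meas : ∀ n, StronglyMeasurable[m] (gn n) := fun n =>
    (hgm.measurable.min (@measurable_const ℝ Ω _ m _)).stronglyMeasurable
  have hgn0 : ∀ n ω, 0 ≤ gn n ω := fun n ω => le_min (hg0 ω) (Nat.cast_nonneg n)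
  have hgn_le_g : ∀ n ω, gn n ω ≤ g ω := fun n ω => min_le_left _ _
  have hgn_le_n : ∀ n ω, gn n ω ≤ n := fun n ω => min_le_right _ _
  have hgnm0 : ∀ n, Measurable[m0] (gn n) := fun n =>
    ((hgn_meas n).mono hm).measurable
  have hgnf_int : ∀ n, Integrable (fun ω => gn n ω * f ω) P := by
    intro n
    refine (hf.const_mul (n : ℝ)).mono' ?_ ?_
    · exact ((hgn_meas n).mono hm).aestronglyMeasurable.mul hf.1
    · filter_upwards with ω
      rw [Real.norm_eq_abs, abs_of_nonneg (mul_nonneg (hgn0 n ω) (hf0 ω))]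
      exact mul_le_mul_of_nonneg_right (hgn_le_n n ω) (hf0 ω)
  have hgnh_int : ∀ n, Integrable (fun ω => gn n ω * h ω) P := by
    intro n
    refine hgh.mono' ?_ ?_
    · exact ((hgn_meas n).mono hm).aestronglyMeasurable.mul (hhm.aestronglyMeasurable (μ := P))
    · filter_upwards with ω
      rw [Real.norm_eq_abs, abs_of_nonneg (mul_nonneg (hgn0 n ω) (hh0 ω))]
      exact mul_le_mul_of_nonneg_right (hgn_le_g n ω) (hh0 ω)
  have key : ∀ n, ∫ ω, gn n ω * f ω ∂P ≤ ∫ ω, g ω * h ω ∂P := by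
    intro n
    have h1 : ∫ ω, gn n ω * f ω ∂P = ∫ ω, gn n ω * (P[f|m]) ω ∂P := by
      have hpull : P[gn n * f|m] =ᵐ[P] gn n * P[f|m] :=
        condExp_mul_of_stronglyMeasurable_left (hgn_meas n) (hgnf_int n) hf
      calc ∫ ω, gn n ω * f ω ∂P = ∫ ω, (P[gn n * f|m]) ω ∂P :=
            (integral_condExp hm (f := gn n * f)).symm
        _ = ∫ ω, (gn n * P[f|m]) ω ∂P := integral_congr_ae hpull
        _ = ∫ ω, gn n ω * (P[f|m]) ω ∂P := rfl
    rw [h1]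
    have hint1 : Integrable (fun ω => gn n ω * (P[f|m]) ω) P := by
      refine ((integrable_condExp (m := m) (f := f) (μ := P)).norm.const_mul (n : ℝ)).mono' ?_ ?_
      · exact ((hgn_meas n).mono hm).aestronglyMeasurable.mul
          (stronglyMeasurable_condExp.mono hm).aestronglyMeasurable
      · filter_upwards with ω
        rw [Real.norm_eq_abs, abs_mul]
        exact mul_le_mul_of_nonneg_right
          ((abs_of_nonneg (hgn0 n ω)).le.trans (hgn_le_n n ω)) (abs_nonneg _)
    have hle1 : (fun ω => gn n ω * (P[f|m]) ω) ≤ᵐ[P] fun ω => gn n ω * h ω := by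
      filter_upwards [hcond] with ω hω
      exact mul_le_mul_of_nonneg_left hω (hgn0 n ω)
    calc ∫ ω, gn n ω * (P[f|m]) ω ∂P ≤ ∫ ω, gn n ω * h ω ∂P :=
          integral_mono_ae hint1 (hgnh_int n) hle1
      _ ≤ ∫ ω, g ω * h ω ∂P := by
          refine integral_mono (hgnh_int n) hgh fun ω => ?_
          exact mul_le_mul_of_nonneg_right (hgn_le_g n ω) (hh0 ω)
  have hsup : ∀ ω, (⨆ n : ℕ, ENNReal.ofReal (gn n ω * f ω)) = ENNReal.ofReal (g ω * f ω) := by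
    intro ω
    refine le_antisymm (iSup_le fun n => ENNReal.ofReal_le_ofReal
      (mul_le_mul_of_nonneg_right (hgn_le_g n ω) (hf0 ω))) ?_
    refine le_iSup_of_le ⌈g ω⌉₊ (le_of_eq ?_)
    have : gn ⌈g ω⌉₊ ω = g ω := min_eq_left (Nat.le_ceil _)
    rw [this]
  have hmono : Monotone fun n : ℕ => fun ω => ENNReal.ofReal (gn n ω * f ω) := by
    intro n k hnk
    refine fun ω => ENNReal.ofReal_le_ofReal
      (mul_le_mul_of_nonneg_right (min_le_min le_rfl ?_) (hf0 ω))
    exact_mod_cast hnk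
  calc ∫⁻ ω, ENNReal.ofReal (g ω * f ω) ∂P
      = ∫⁻ ω, ⨆ n : ℕ, ENNReal.ofReal (gn n ω * f ω) ∂P := by
        refine lintegral_congr fun ω => (hsup ω).symm
    _ = ⨆ n : ℕ, ∫⁻ ω, ENNReal.ofReal (gn n ω * f ω) ∂P :=
        lintegral_iSup (fun n => ((hgnm0 n).mul hfm).ennreal_ofReal) hmono
    _ ≤ ENNReal.ofReal (∫ ω, g ω * h ω ∂P) := by
        refine iSup_le fun n => ?_
        rw [← ofReal_integral_eq_lintegral_ofReal (hgnf_int n)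
          (Filter.Eventually.of_forall fun ω => mul_nonneg (hgn0 n ω) (hf0 ω))]
        exact ENNReal.ofReal_le_ofReal (key n)

lemma expW_le_one {Ω : Type*} [m0 : MeasurableSpace Ω]
    (P : Measure Ω) [IsProbabilityMeasure P] (ℱ : Filtration ℕ m0)
    (σ : ℝ) (Y ε : ℕ → Ω → ℝ)
    (hY_adapted : ∀ t, 1 ≤ t → StronglyMeasurable[ℱ t] (Y t))
    (hε_pred : ∀ t, 1 ≤ t → StronglyMeasurable[ℱ (t - 1)] (ε t))
    (hint : ∀ lam : ℝ, ∀ t, 1 ≤ t →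
      Integrable (fun ω => Real.exp (lam * Y t ω)) P)
    (hmgf : ∀ lam : ℝ, ∀ t, 1 ≤ t → ∀ᵐ ω ∂P,
      (P[fun ω => Real.exp (lam * Y t ω)|ℱ (t - 1)]) ω ≤
        Real.exp (lam ^ 2 * σ ^ 2 * ε t ω / 2))
    (lam : ℝ) :
    ∀ s : ℕ, ∫⁻ ω, ENNReal.ofReal (Real.exp (lam * ∑ τ ∈ Finset.Icc 1 s, Y τ ω
      - lam ^ 2 * σ ^ 2 / 2 * ∑ τ ∈ Finset.Icc 1 s, ε τ ω)) ∂P ≤ 1 := by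
  have hYm : ∀ τ, 1 ≤ τ → Measurable[m0] (Y τ) := fun τ h =>
    ((hY_adapted τ h).mono (ℱ.le τ)).measurable
  have hεm : ∀ τ, 1 ≤ τ → Measurable[m0] (ε τ) := fun τ h =>
    ((hε_pred τ h).mono (ℱ.le (τ - 1))).measurable
  intro s
  induction s with
  | zero =>
    have : Finset.Icc 1 0 = (∅ : Finset ℕ) := Finset.Icc_eq_empty (by omega)
    simp [this]
  | succ s ih =>
    -- notation
    set g : Ω → ℝ := fun ω => Real.exp (lam * ∑ τ ∈ Finset.Icc 1 s, Y τ ω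
      - lam ^ 2 * σ ^ 2 / 2 * ∑ τ ∈ Finset.Icc 1 s, ε τ ω
      - lam ^ 2 * σ ^ 2 * ε (s + 1) ω / 2) with hg_def
    set f : Ω → ℝ := fun ω => Real.exp (lam * Y (s + 1) ω) with hf_def
    set h : Ω → ℝ := fun ω => Real.exp (lam ^ 2 * σ ^ 2 * ε (s + 1) ω / 2) with hh_def
    have hεsm : StronglyMeasurable[ℱ s] (ε (s + 1)) := by
      simpa using hε_pred (s + 1) (by omega)
    have hgh_eq : ∀ ω, g ω * h ω = Real.exp (lam * ∑ τ ∈ Finset.Icc 1 s, Y τ ω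
        - lam ^ 2 * σ ^ 2 / 2 * ∑ τ ∈ Finset.Icc 1 s, ε τ ω) := by
      intro ω
      rw [hg_def, hh_def, ← Real.exp_add]
      congr 1
      ring
    have hgf_eq : ∀ ω, Real.exp (lam * ∑ τ ∈ Finset.Icc 1 (s + 1), Y τ ω
        - lam ^ 2 * σ ^ 2 / 2 * ∑ τ ∈ Finset.Icc 1 (s + 1), ε τ ω) = g ω * f ω := by
      intro ω
      rw [hg_def, hf_def, ← Real.exp_add]
      congr 1
      rw [Finset.sum_Icc_succ_top (by omega : 1 ≤ s + 1) (fun τ => Y τ ω),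
        Finset.sum_Icc_succ_top (by omega : 1 ≤ s + 1) (fun τ => ε τ ω)]
      ring
    have hZsum_m : Measurable[m0] fun ω => ∑ τ ∈ Finset.Icc 1 s, Y τ ω :=
      Finset.measurable_sum _ fun τ hτ => hYm τ (Finset.mem_Icc.mp hτ).1
    have hNsum_m : Measurable[m0] fun ω => ∑ τ ∈ Finset.Icc 1 s, ε τ ω :=
      Finset.measurable_sum _ fun τ hτ => hεm τ (Finset.mem_Icc.mp hτ).1
    have hWs_m : Measurable[m0] fun ω => Real.exp (lam * ∑ τ ∈ Finset.Icc 1 s, Y τ ω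
        - lam ^ 2 * σ ^ 2 / 2 * ∑ τ ∈ Finset.Icc 1 s, ε τ ω) :=
      ((hZsum_m.const_mul lam).sub (hNsum_m.const_mul _)).exp
    have hWs_int : Integrable (fun ω => Real.exp (lam * ∑ τ ∈ Finset.Icc 1 s, Y τ ω
        - lam ^ 2 * σ ^ 2 / 2 * ∑ τ ∈ Finset.Icc 1 s, ε τ ω)) P := by
      refine ⟨hWs_m.aestronglyMeasurable, ?_⟩
      rw [hasFiniteIntegral_iff_ofReal
        (Filter.Eventually.of_forall fun ω => (Real.exp_pos _).le)]
      exact lt_of_le_of_lt ih ENNReal.one_lt_top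
    have hgh_int : Integrable (fun ω => g ω * h ω) P := by
      refine hWs_int.congr (Filter.Eventually.of_forall fun ω => (hgh_eq ω).symm)
    have hg_sm : StronglyMeasurable[ℱ s] g := by
      refine Real.continuous_exp.comp_stronglyMeasurable ?_
      have hZ : StronglyMeasurable[ℱ s] fun ω => ∑ τ ∈ Finset.Icc 1 s, Y τ ω := by
        have : (fun ω => ∑ τ ∈ Finset.Icc 1 s, Y τ ω) = ∑ τ ∈ Finset.Icc 1 s, Y τ := by
          funext ω; simp
        rw [this]
        exact Finset.stronglyMeasurable_sum _ fun τ hτ =>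
          (hY_adapted τ (Finset.mem_Icc.mp hτ).1).mono (ℱ.mono (Finset.mem_Icc.mp hτ).2)
      have hN : StronglyMeasurable[ℱ s] fun ω => ∑ τ ∈ Finset.Icc 1 s, ε τ ω := by
        have : (fun ω => ∑ τ ∈ Finset.Icc 1 s, ε τ ω) = ∑ τ ∈ Finset.Icc 1 s, ε τ := by
          funext ω; simp
        rw [this]
        refine Finset.stronglyMeasurable_sum _ fun τ hτ => ?_
        exact (hε_pred τ (Finset.mem_Icc.mp hτ).1).mono
          (ℱ.mono (by
            have := (Finset.mem_Icc.mp hτ).2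
            omega))
      have hlast : StronglyMeasurable[ℱ s] fun ω => lam ^ 2 * σ ^ 2 * ε (s + 1) ω / 2 := by
        have : (fun ω => lam ^ 2 * σ ^ 2 * ε (s + 1) ω / 2)
            = fun ω => (lam ^ 2 * σ ^ 2 / 2) * ε (s + 1) ω := by
          funext ω; ring
        rw [this]
        exact stronglyMeasurable_const.mul hεsm
      exact ((stronglyMeasurable_const.mul hZ).sub (stronglyMeasurable_const.mul hN)).sub hlast
    have hcond : ∀ᵐ ω ∂P, (P[f|ℱ s]) ω ≤ h ω := by
      simpa using hmgf lam (s + 1) (by omega)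
    have hmain := aux_truncation_step P (ℱ.le s) hg_sm
      (fun ω => (Real.exp_pos _).le)
      ((((hYm (s + 1) (by omega)).const_mul lam).exp : Measurable f))
      (hint lam (s + 1) (by omega)) (fun ω => (Real.exp_pos _).le)
      ((((hεm (s + 1) (by omega)).const_mul _).div_const _).exp : Measurable h)
      (fun ω => (Real.exp_pos _).le) hgh_int hcond
    calc ∫⁻ ω, ENNReal.ofReal (Real.exp (lam * ∑ τ ∈ Finset.Icc 1 (s + 1), Y τ ω
          - lam ^ 2 * σ ^ 2 / 2 * ∑ τ ∈ Finset.Icc 1 (s + 1), ε τ ω)) ∂P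
        = ∫⁻ ω, ENNReal.ofReal (g ω * f ω) ∂P := by
          exact lintegral_congr fun ω => by rw [hgf_eq ω]
      _ ≤ ENNReal.ofReal (∫ ω, g ω * h ω ∂P) := hmain
      _ = ∫⁻ ω, ENNReal.ofReal (g ω * h ω) ∂P :=
          ofReal_integral_eq_lintegral_ofReal hgh_int
            (Filter.Eventually.of_forall fun ω =>
              mul_nonneg (Real.exp_pos _).le (Real.exp_pos _).le)
      _ = ∫⁻ ω, ENNReal.ofReal (Real.exp (lam * ∑ τ ∈ Finset.Icc 1 s, Y τ ω
          - lam ^ 2 * σ ^ 2 / 2 * ∑ τ ∈ Finset.Icc 1 s, ε τ ω)) ∂P :=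
          lintegral_congr fun ω => by rw [hgh_eq ω]
      _ ≤ 1 := ih

lemma slab_bound {Ω : Type*} [m0 : MeasurableSpace Ω]
    (P : Measure Ω) [IsProbabilityMeasure P] (ℱ : Filtration ℕ m0)
    (σ : ℝ) (Y ε : ℕ → Ω → ℝ)
    (hY_adapted : ∀ t, 1 ≤ t → StronglyMeasurable[ℱ t] (Y t))
    (hε_pred : ∀ t, 1 ≤ t → StronglyMeasurable[ℱ (t - 1)] (ε t))
    (hint : ∀ lam : ℝ, ∀ t, 1 ≤ t →
      Integrable (fun ω => Real.exp (lam * Y t ω)) P)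
    (hmgf : ∀ lam : ℝ, ∀ t, 1 ≤ t → ∀ᵐ ω ∂P,
      (P[fun ω => Real.exp (lam * Y t ω)|ℱ (t - 1)]) ω ≤
        Real.exp (lam ^ 2 * σ ^ 2 * ε t ω / 2))
    (lam b : ℝ) (t : ℕ) {A : Set Ω}
    (hsub : ∀ ω ∈ A, b ≤ lam * ∑ τ ∈ Finset.Icc 1 t, Y τ ω
      - lam ^ 2 * σ ^ 2 / 2 * ∑ τ ∈ Finset.Icc 1 t, ε τ ω) :
    P A ≤ ENNReal.ofReal (Real.exp (-b)) := by
  have hW := expW_le_one P ℱ σ Y ε hY_adapted hε_pred hint hmgf lam t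
  have hYm : ∀ τ, 1 ≤ τ → Measurable[m0] (Y τ) := fun τ h =>
    ((hY_adapted τ h).mono (ℱ.le τ)).measurable
  have hεm : ∀ τ, 1 ≤ τ → Measurable[m0] (ε τ) := fun τ h =>
    ((hε_pred τ h).mono (ℱ.le (τ - 1))).measurable
  have hWm : Measurable[m0] fun ω => ENNReal.ofReal (Real.exp
      (lam * ∑ τ ∈ Finset.Icc 1 t, Y τ ω
        - lam ^ 2 * σ ^ 2 / 2 * ∑ τ ∈ Finset.Icc 1 t, ε τ ω)) := by
    refine Measurable.ennreal_ofReal (Measurable.exp ?_)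
    exact ((Finset.measurable_sum _ fun τ hτ =>
        hYm τ (Finset.mem_Icc.mp hτ).1).const_mul lam).sub
      ((Finset.measurable_sum _ fun τ hτ =>
        hεm τ (Finset.mem_Icc.mp hτ).1).const_mul _)
  have h1 : ENNReal.ofReal (Real.exp b) * P A ≤ 1 := by
    calc ENNReal.ofReal (Real.exp b) * P A
        = ∫⁻ _ in A, ENNReal.ofReal (Real.exp b) ∂P := (setLIntegral_const A _).symm
      _ ≤ ∫⁻ ω in A, ENNReal.ofReal (Real.exp
            (lam * ∑ τ ∈ Finset.Icc 1 t, Y τ ω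
              - lam ^ 2 * σ ^ 2 / 2 * ∑ τ ∈ Finset.Icc 1 t, ε τ ω)) ∂P := by
          refine setLIntegral_mono hWm fun ω hω => ?_
          exact ENNReal.ofReal_le_ofReal (Real.exp_le_exp.mpr (hsub ω hω))
      _ ≤ ∫⁻ ω, ENNReal.ofReal (Real.exp
            (lam * ∑ τ ∈ Finset.Icc 1 t, Y τ ω
              - lam ^ 2 * σ ^ 2 / 2 * ∑ τ ∈ Finset.Icc 1 t, ε τ ω)) ∂P :=
          setLIntegral_le_lintegral _ _
      _ ≤ 1 := hW
  rw [mul_comm] at h1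
  have h2 : P A ≤ (ENNReal.ofReal (Real.exp b))⁻¹ := ENNReal.le_inv_iff_mul_le.mpr h1
  refine h2.trans_eq ?_
  rw [← ENNReal.ofReal_inv_of_pos (Real.exp_pos _), ← Real.exp_neg]

lemma cover_lemma (ζ : ℝ) (hζ : 1 < ζ) (K : ℕ) (hK : 1 ≤ K) (N B : ℝ)
    (h1 : 1 ≤ N) (h2 : N ≤ B) (hB : B ≤ ζ ^ K) :
    ∃ k, k < K ∧ ζ ^ k ≤ N ∧ N ≤ ζ ^ (k + 1) := by
  classical
  set Q : ℕ → Prop := fun j => ζ ^ j ≤ N with hQ_def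
  have hQ0 : Q 0 := by simpa [hQ_def] using h1
  set k := Nat.findGreatest Q K with hk_def
  have hkK : k ≤ K := Nat.findGreatest_le K
  have hQk : Q k := Nat.findGreatest_spec (Nat.zero_le K) hQ0
  by_cases hk : k < K
  · refine ⟨k, hk, hQk, ?_⟩
    have hnot : ¬ Q (k + 1) :=
      Nat.findGreatest_is_greatest (Nat.lt_succ_self k) (by omega)
    exact le_of_not_ge hnot
  · have hkK' : k = K := le_antisymm hkK (not_lt.mp hk)
    refine ⟨K - 1, by omega, ?_, ?_⟩
    · refine le_trans ?_ (hkK' ▸ hQk)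
      exact pow_le_pow_right₀ (by linarith) (by omega)
    · have : K - 1 + 1 = K := by omega
      rw [this]
      exact h2.trans hB

set_option maxHeartbeats 1000000 in
lemma exponent_bound (σ ξ ζ : ℝ) (hσ : 0 < σ) (hξ : 0 < ξ) (hζ : 1 < ζ)
    (L : ℝ) (hL : 0 < L) (k : ℕ) (S N : ℝ)
    (hS : Real.sqrt (2 * (ξ + 1) * σ ^ 2 * L * N) ≤ S)
    (hNlo : ζ ^ k ≤ N) (hNhi : N ≤ ζ ^ (k + 1)) :
    (ξ + 1) * (1 - (ζ - 1) ^ 2 / 16) * L ≤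
      (Real.sqrt (2 * (ξ + 1) * L) / (σ * Real.sqrt (ζ ^ k * Real.sqrt ζ))) * S
        - (Real.sqrt (2 * (ξ + 1) * L) / (σ * Real.sqrt (ζ ^ k * Real.sqrt ζ))) ^ 2
          * σ ^ 2 / 2 * N := by
  have hζ0 : (0 : ℝ) < ζ := by linarith
  have hsζ : 0 < Real.sqrt ζ := Real.sqrt_pos.mpr hζ0
  have hsζ_sq : Real.sqrt ζ * Real.sqrt ζ = ζ := Real.mul_self_sqrt hζ0.le
  set c : ℝ := 2 * (ξ + 1) * L with hc_def
  have hc : 0 < c := by positivity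
  set q : ℝ := ζ ^ k * Real.sqrt ζ with hq_def
  have hq : 0 < q := by positivity
  have hNpos : 0 < N := lt_of_lt_of_le (pow_pos hζ0 k) hNlo
  set lam : ℝ := Real.sqrt c / (σ * Real.sqrt q) with hlam_def
  have hsq : 0 < Real.sqrt q := Real.sqrt_pos.mpr hq
  have hsc : 0 < Real.sqrt c := Real.sqrt_pos.mpr hc
  have hlam : 0 < lam := div_pos hsc (by positivity)
  set u : ℝ := Real.sqrt (N / q) with hu_def
  have hu : 0 < u := Real.sqrt_pos.mpr (div_pos hNpos hq)
  -- e1 : the sqrt threshold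
  have e1 : Real.sqrt (2 * (ξ + 1) * σ ^ 2 * L * N)
      = σ * (Real.sqrt c * Real.sqrt N) := by
    rw [show 2 * (ξ + 1) * σ ^ 2 * L * N = (σ * (Real.sqrt c * Real.sqrt N)) ^ 2 by
      rw [mul_pow, mul_pow, Real.sq_sqrt hc.le, Real.sq_sqrt hNpos.le]; ring]
    exact Real.sqrt_sq (by positivity)
  -- e2 : lam * threshold = c * u
  have hu_eq : u = Real.sqrt N / Real.sqrt q := by
    rw [hu_def, Real.sqrt_div hNpos.le]
  have e2 : lam * (σ * (Real.sqrt c * Real.sqrt N)) = c * u := by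
    have hcc : Real.sqrt c * Real.sqrt c = c := Real.mul_self_sqrt hc.le
    rw [hlam_def, hu_eq]
    field_simp
    linear_combination hcc
  -- e3 : lam^2 * σ^2 / 2 * N = c / 2 * u^2
  have hu_sq : u ^ 2 = N / q := Real.sq_sqrt (div_pos hNpos hq).le
  have e3 : lam ^ 2 * σ ^ 2 / 2 * N = c / 2 * u ^ 2 := by
    rw [hlam_def, hu_sq, div_pow, mul_pow, Real.sq_sqrt hc.le, Real.sq_sqrt hq.le]
    field_simp
  -- bounds on u
  set s4 : ℝ := Real.sqrt (Real.sqrt ζ) with hs4_def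
  have hs4 : 0 < s4 := Real.sqrt_pos.mpr hsζ
  have hs4_sq : s4 * s4 = Real.sqrt ζ := Real.mul_self_sqrt hsζ.le
  have hu_hi : u ≤ s4 := by
    rw [hu_def, hs4_def]
    refine Real.sqrt_le_sqrt ?_
    rw [div_le_iff₀ hq]
    calc N ≤ ζ ^ (k + 1) := hNhi
      _ = Real.sqrt ζ * q := by rw [hq_def, pow_succ]; nlinarith [hsζ_sq]
  have hu_lo : 1 / s4 ≤ u := by
    have h1 : (1 : ℝ) / Real.sqrt ζ ≤ N / q := by
      rw [div_le_div_iff₀ hsζ hq]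
      calc 1 * q = ζ ^ k * Real.sqrt ζ := by rw [hq_def]; ring
        _ ≤ N * Real.sqrt ζ := by
          exact mul_le_mul_of_nonneg_right hNlo hsζ.le
    have hinv_eq : Real.sqrt (1 / Real.sqrt ζ) = 1 / s4 := by
      rw [one_div, one_div, Real.sqrt_inv, hs4_def]
    calc 1 / s4 = Real.sqrt (1 / Real.sqrt ζ) := hinv_eq.symm
      _ ≤ u := by rw [hu_def]; exact Real.sqrt_le_sqrt h1
  have hs4_le : s4 ≤ 1 + (ζ - 1) / 4 := by
    refine le_of_pow_le_pow_left₀ (by norm_num : (4 : ℕ) ≠ 0) (by linarith) ?_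
    have h4 : s4 ^ 4 = ζ := by
      have : s4 ^ 4 = (s4 * s4) * (s4 * s4) := by ring
      rw [this, hs4_sq, hsζ_sq]
    rw [h4]
    have := one_add_mul_le_pow (a := (ζ - 1) / 4) (by linarith) 4
    calc ζ = 1 + (4 : ℕ) * ((ζ - 1) / 4) := by push_cast; ring
      _ ≤ (1 + (ζ - 1) / 4) ^ 4 := this
  have hinv : 2 - s4 ≤ 1 / s4 := by
    rw [le_div_iff₀ hs4]
    have expand : (2 - s4) * s4 = 1 - (s4 - 1) ^ 2 := by ring
    rw [expand]
    linarith [sq_nonneg (s4 - 1)]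
  have hle1 : 1 - u ≤ (ζ - 1) / 4 := by linarith
  have hle2 : u - 1 ≤ (ζ - 1) / 4 := by linarith
  have hsq_le : (1 - u) ^ 2 ≤ ((ζ - 1) / 4) ^ 2 := by
    refine sq_le_sq' (by linarith) hle1
  -- chain
  have step1 : c * u - c / 2 * u ^ 2 ≤ lam * S - lam ^ 2 * σ ^ 2 / 2 * N := by
    rw [← e2, ← e3]
    have : lam * (σ * (Real.sqrt c * Real.sqrt N)) ≤ lam * S := by
      refine mul_le_mul_of_nonneg_left ?_ hlam.le
      rw [← e1]; exact hS
    linarith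
  refine le_trans ?_ step1
  have key := mul_le_mul_of_nonneg_left hsq_le (half_pos hc).le
  have expand : c * u - c / 2 * u ^ 2 = c / 2 - c / 2 * (1 - u) ^ 2 := by ring
  have expand2 : (ξ + 1) * (1 - (ζ - 1) ^ 2 / 16) * L
      = c / 2 - c / 2 * ((ζ - 1) / 4) ^ 2 := by rw [hc_def]; ring
  rw [expand, expand2]
  linarith [key]

set_option maxHeartbeats 1000000 in
/-- Two-sided form of the tail probability bound of Lemma 3. -/
theorem two_sided_tail_bound {Ω : Type*} [m0 : MeasurableSpace Ω]
    (P : Measure Ω) [IsProbabilityMeasure P] (ℱ : Filtration ℕ m0)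
    (σ ξ ζ : ℝ) (hσ : 0 < σ) (hξ : 0 < ξ) (hζ : 1 < ζ) (d : ℕ)
    (Y ε : ℕ → Ω → ℝ)
    (hY_adapted : ∀ t, 1 ≤ t → StronglyMeasurable[ℱ t] (Y t))
    (hε_pred : ∀ t, 1 ≤ t → StronglyMeasurable[ℱ (t - 1)] (ε t))
    (hε_nonneg : ∀ t, 1 ≤ t → ∀ ω, 0 ≤ ε t ω)
    (hint : ∀ lam : ℝ, ∀ t, 1 ≤ t →
      Integrable (fun ω => Real.exp (lam * Y t ω)) P)
    (hmgf : ∀ lam : ℝ, ∀ t, 1 ≤ t → ∀ᵐ ω ∂P,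
      (P[fun ω => Real.exp (lam * Y t ω)|ℱ (t - 1)]) ω ≤
        Real.exp (lam ^ 2 * σ ^ 2 * ε t ω / 2))
    (Z N : ℕ → Ω → ℝ)
    (hZ : ∀ t ω, Z t ω = ∑ τ ∈ Finset.Icc 1 t, Y τ ω)
    (hN : ∀ t ω, N t ω = ∑ τ ∈ Finset.Icc 1 t, ε τ ω)
    (t : ℕ) (ht : 2 ≤ t)
    (hNt : ∀ᵐ ω ∂P, 1 ≤ N t ω ∧ N t ω ≤ ((d : ℝ) + 1) * t) :
    P {ω | |Z t ω| ≥ Real.sqrt (2 * (ξ + 1) * σ ^ 2 * Real.log t * N t ω)} ≤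
      ENNReal.ofReal (2 * (⌈Real.log (((d : ℝ) + 1) * t) / Real.log ζ⌉₊ : ℝ) *
        (t : ℝ) ^ (-(ξ + 1) * (1 - (ζ - 1) ^ 2 / 16))) := by
  classical
  have ht2 : (2 : ℝ) ≤ (t : ℝ) := by exact_mod_cast ht
  have ht1 : (1 : ℝ) < (t : ℝ) := by linarith
  have htpos : (0 : ℝ) < (t : ℝ) := by linarith
  have hL : 0 < Real.log t := Real.log_pos ht1
  have hζ0 : (0 : ℝ) < ζ := by linarith
  have hlogζ : 0 < Real.log ζ := Real.log_pos hζ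
  have hd0 : (0 : ℝ) ≤ (d : ℝ) := Nat.cast_nonneg d
  have hB1 : (1 : ℝ) < ((d : ℝ) + 1) * t := by nlinarith
  set K := ⌈Real.log (((d : ℝ) + 1) * t) / Real.log ζ⌉₊ with hK_def
  have hK1 : 1 ≤ K := Nat.ceil_pos.mpr (div_pos (Real.log_pos hB1) hlogζ)
  have hζK : ((d : ℝ) + 1) * t ≤ ζ ^ K := by
    have h1 : Real.log (((d : ℝ) + 1) * t) / Real.log ζ ≤ (K : ℝ) := Nat.le_ceil _
    have h2 : Real.log (((d : ℝ) + 1) * t) ≤ (K : ℝ) * Real.log ζ := by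
      rwa [div_le_iff₀ hlogζ] at h1
    calc ((d : ℝ) + 1) * t = Real.exp (Real.log (((d : ℝ) + 1) * t)) :=
          (Real.exp_log (by linarith)).symm
      _ ≤ Real.exp ((K : ℝ) * Real.log ζ) := Real.exp_le_exp.mpr h2
      _ = ζ ^ K := by rw [Real.exp_nat_mul, Real.exp_log hζ0]
  set β := (ξ + 1) * (1 - (ζ - 1) ^ 2 / 16) with hβ_def
  set lamf : ℕ → ℝ := fun k =>
    Real.sqrt (2 * (ξ + 1) * Real.log t) / (σ * Real.sqrt (ζ ^ k * Real.sqrt ζ))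
    with hlamf_def
  set Ap : ℕ → Set Ω := fun k => {ω |
    Real.sqrt (2 * (ξ + 1) * σ ^ 2 * Real.log t * N t ω) ≤ Z t ω ∧
      ζ ^ k ≤ N t ω ∧ N t ω ≤ ζ ^ (k + 1)} with hAp_def
  set Am : ℕ → Set Ω := fun k => {ω |
    Real.sqrt (2 * (ξ + 1) * σ ^ 2 * Real.log t * N t ω) ≤ -(Z t ω) ∧
      ζ ^ k ≤ N t ω ∧ N t ω ≤ ζ ^ (k + 1)} with hAm_def
  have hAp_bound : ∀ k, P (Ap k) ≤ ENNReal.ofReal (Real.exp (-(β * Real.log t))) := by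
    intro k
    refine slab_bound P ℱ σ Y ε hY_adapted hε_pred hint hmgf (lamf k)
      (β * Real.log t) t ?_
    intro ω hω
    obtain ⟨h1, h2, h3⟩ := hω
    have hexp := exponent_bound σ ξ ζ hσ hξ hζ (Real.log t) hL k (Z t ω) (N t ω) h1 h2 h3
    rw [← hZ t ω, ← hN t ω]
    exact hexp
  have hAm_bound : ∀ k, P (Am k) ≤ ENNReal.ofReal (Real.exp (-(β * Real.log t))) := by
    intro k
    refine slab_bound P ℱ σ Y ε hY_adapted hε_pred hint hmgf (-(lamf k))
      (β * Real.log t) t ?_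
    intro ω hω
    obtain ⟨h1, h2, h3⟩ := hω
    have hexp := exponent_bound σ ξ ζ hσ hξ hζ (Real.log t) hL k (-(Z t ω)) (N t ω) h1 h2 h3
    rw [← hZ t ω, ← hN t ω, neg_sq]
    have hmuleq : -(lamf k) * Z t ω = lamf k * -(Z t ω) := by ring
    rw [hmuleq]
    exact hexp
  have key : P {ω | |Z t ω| ≥ Real.sqrt (2 * (ξ + 1) * σ ^ 2 * Real.log t * N t ω)}
      ≤ P (⋃ k ∈ Finset.range K, (Ap k ∪ Am k)) := by
    refine measure_mono_ae ?_
    filter_upwards [hNt] with ω hω hmem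
    obtain ⟨k, hkK, hk1, hk2⟩ := cover_lemma ζ hζ K hK1 (N t ω)
      (((d : ℝ) + 1) * t) hω.1 hω.2 hζK
    refine Set.mem_biUnion (Finset.mem_range.mpr hkK) ?_
    rcases le_abs.mp hmem with hcase | hcase
    · exact Or.inl ⟨hcase, hk1, hk2⟩
    · exact Or.inr ⟨hcase, hk1, hk2⟩
  have hEg : P (⋃ k ∈ Finset.range K, (Ap k ∪ Am k))
      ≤ (K : ℝ≥0∞) * (2 * ENNReal.ofReal (Real.exp (-(β * Real.log t)))) := by
    calc P (⋃ k ∈ Finset.range K, (Ap k ∪ Am k))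
        ≤ ∑ k ∈ Finset.range K, P (Ap k ∪ Am k) :=
          measure_biUnion_finset_le _ _
      _ ≤ ∑ _k ∈ Finset.range K, (2 * ENNReal.ofReal (Real.exp (-(β * Real.log t)))) := by
          refine Finset.sum_le_sum fun k _ => ?_
          refine (measure_union_le _ _).trans ?_
          rw [two_mul]
          exact add_le_add (hAp_bound k) (hAm_bound k)
      _ = (K : ℝ≥0∞) * (2 * ENNReal.ofReal (Real.exp (-(β * Real.log t)))) := by
          rw [Finset.sum_const, Finset.card_range, nsmul_eq_mul]
  have hfin : (K : ℝ≥0∞) * (2 * ENNReal.ofReal (Real.exp (-(β * Real.log t))))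
      = ENNReal.ofReal (2 * (K : ℝ) * (t : ℝ) ^ (-(ξ + 1) * (1 - (ζ - 1) ^ 2 / 16))) := by
    have hrpow : (t : ℝ) ^ (-(ξ + 1) * (1 - (ζ - 1) ^ 2 / 16))
        = Real.exp (-(β * Real.log t)) := by
      rw [Real.rpow_def_of_pos htpos, hβ_def]
      congr 1
      ring
    rw [hrpow, ← ENNReal.ofReal_natCast K, ← ENNReal.ofReal_ofNat 2,
      ← ENNReal.ofReal_mul (by norm_num), ← ENNReal.ofReal_mul (by positivity)]
    congr 1
    ring
  exact key.trans (hEg.trans (le_of_eq hfin))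
end

section
/- For every real number ξ ≥ 1.1, every integer d ≥ 0, and every integer T ≥ 1, one has Σ_{t=1}^{T−1} (1/ln 1.3) · ln((d+1)·t) / t^{(ξ+1)(1−(1.3−1)²/16)} ≤ 12·ln(3(d+1)) + 3·(ln(d+1) + 1). -/
lemma log13 : (1:ℝ)/4 ≤ Real.log 1.3 := by
  rw [Real.le_log_iff_exp_le (by norm_num)]
  have h4 : Real.exp (1/4) ^ (4:ℕ) = Real.exp 1 := by
    rw [← Real.exp_nat_mul]; norm_num
  have h : Real.exp 1 < 2.7182818286 := Real.exp_one_lt_d9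
  nlinarith [Real.exp_pos (1/4:ℝ), sq_nonneg (Real.exp (1/4) - 1.3), sq_nonneg (Real.exp (1/4) + 1.3)]

lemma log3 : (13:ℝ)/12 ≤ Real.log 3 := by
  rw [Real.le_log_iff_exp_le (by norm_num)]
  have h12 : Real.exp (13/12) ^ (12:ℕ) = Real.exp 13 := by
    rw [← Real.exp_nat_mul]; norm_num
  have h13 : Real.exp 13 = Real.exp 1 ^ (13:ℕ) := by
    rw [← Real.exp_nat_mul]; norm_num
  have h : Real.exp 1 < 2.7182818286 := Real.exp_one_lt_d9
  have h1 : Real.exp 1 ^ (13:ℕ) ≤ 2.7182818286 ^ (13:ℕ) := by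
    apply pow_le_pow_left₀ (Real.exp_pos 1).le h.le
  have h2 : (2.7182818286:ℝ) ^ (13:ℕ) ≤ 3 ^ (12:ℕ) := by norm_num
  have key : Real.exp (13/12) ^ (12:ℕ) ≤ 3 ^ (12:ℕ) := by
    rw [h12, h13]; linarith
  exact le_of_pow_le_pow_left₀ (by norm_num) (by norm_num) key


lemma sum_inv_sq_le (N : ℕ) : ∑ t ∈ Finset.Icc 1 N, ((t:ℝ)^2)⁻¹ ≤ 2 := by
  rcases Nat.eq_zero_or_pos N with h | h
  · simp [h]
  · have key : ∀ n : ℕ, 1 ≤ n → ∑ t ∈ Finset.Icc 1 n, ((t:ℝ)^2)⁻¹ ≤ 2 - 1/n := by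
      intro n hn
      induction n, hn using Nat.le_induction with
      | base => norm_num
      | succ n hn ih =>
        rw [Finset.sum_Icc_succ_top (by omega)]
        have hn' : (1:ℝ) ≤ (n:ℝ) := by exact_mod_cast hn
        have hstep : (((n:ℕ)+1:ℝ)^2)⁻¹ ≤ 1/(n:ℝ) - 1/((n:ℝ)+1) := by
          rw [div_sub_div _ _ (by linarith) (by linarith), inv_eq_one_div,
            div_le_div_iff₀ (by positivity) (by positivity)]
          nlinarith
        push_cast at hstep ⊢
        have := ih
        linarith
    have := key N h
    have : (0:ℝ) ≤ 1/N := by positivity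
    linarith [key N h]

lemma sum_sqrt_le (N : ℕ) : ∑ t ∈ Finset.Icc 1 N, (Real.sqrt t - 1)/(t:ℝ)^2 ≤ 2 := by
  rcases Nat.eq_zero_or_pos N with h | h
  · simp [h]
  · have key : ∀ n : ℕ, 1 ≤ n →
        ∑ t ∈ Finset.Icc 1 n, (Real.sqrt t - 1)/(t:ℝ)^2 ≤ 2 - 2/Real.sqrt n := by
      intro n hn
      induction n, hn using Nat.le_induction with
      | base => simp
      | succ n hn ih =>
        rw [Finset.sum_Icc_succ_top (by omega)]
        have hn' : (1:ℝ) ≤ (n:ℝ) := by exact_mod_cast hn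
        set a := Real.sqrt n with ha
        set b := Real.sqrt ((n:ℝ)+1) with hb
        have ha2 : a^2 = n := Real.sq_sqrt (by linarith)
        have hb2 : b^2 = (n:ℝ)+1 := Real.sq_sqrt (by linarith)
        have ha1 : 1 ≤ a := by
          rw [show (1:ℝ) = Real.sqrt 1 by simp [Real.sqrt_one]]
          exact Real.sqrt_le_sqrt hn'
        have hab : a ≤ b := Real.sqrt_le_sqrt (by linarith)
        have hb0 : 0 < b := by linarith
        have ha0 : 0 < a := by linarith
        have hstep : (b - 1)/(((n:ℝ)+1))^2 ≤ 2/a - 2/b := by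
          have h1 : ((n:ℝ)+1)^2 = b^4 := by rw [← hb2]; ring
          rw [h1, div_sub_div _ _ ha0.ne' hb0.ne',
            div_le_div_iff₀ (by positivity) (by positivity)]
          have hba : 1 ≤ 2*b*(b-a) := by nlinarith
          nlinarith [mul_pos ha0 hb0, sq_nonneg b, mul_le_mul_of_nonneg_left hba (by positivity : (0:ℝ) ≤ b^2)]
        have hcast : Real.sqrt ((n+1:ℕ):ℝ) = b := by push_cast; rfl
        push_cast
        push_cast at ih
        linarith
    have hs : 0 < Real.sqrt N := Real.sqrt_pos.mpr (by exact_mod_cast h)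
    have : (0:ℝ) ≤ 2/Real.sqrt N := by positivity
    linarith [key N h]


/-- Lemma 4 of the paper (with `ζ = 1.3`): the cumulative sum of the tail
probability bounds is bounded by a constant depending only on the degree `d`. -/
theorem tail_sum_bound (ξ : ℝ) (hξ : 1.1 ≤ ξ) (d : ℕ) (T : ℕ) (hT : 1 ≤ T) :
    ∑ t ∈ Finset.Icc 1 (T - 1),
        (1 / Real.log 1.3) *
          (Real.log (((d : ℝ) + 1) * t) /
            (t : ℝ) ^ ((ξ + 1) * (1 - (1.3 - 1) ^ 2 / 16))) ≤
      12 * Real.log (3 * ((d : ℝ) + 1)) + 3 * (Real.log ((d : ℝ) + 1) + 1) := by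
  have hlog13 : (1:ℝ)/4 ≤ Real.log 1.3 := log13
  have hlog3 : (13:ℝ)/12 ≤ Real.log 3 := log3
  have hS1 : ∑ t ∈ Finset.Icc 1 (T-1), (((t:ℝ))^2)⁻¹ ≤ 2 := sum_inv_sq_le _
  have hS2 : ∑ t ∈ Finset.Icc 1 (T-1), (Real.sqrt t - 1)/(t:ℝ)^2 ≤ 2 := sum_sqrt_le _
  set A := Real.log ((d:ℝ)+1) with hA
  have hA0 : 0 ≤ A := Real.log_nonneg (by push_cast; linarith)
  have hterm : ∀ t ∈ Finset.Icc 1 (T-1),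
      (1 / Real.log 1.3) *
          (Real.log (((d : ℝ) + 1) * t) /
            (t : ℝ) ^ ((ξ + 1) * (1 - (1.3 - 1) ^ 2 / 16))) ≤
      4 * A * ((t:ℝ)^2)⁻¹ + 8 * ((Real.sqrt t - 1)/(t:ℝ)^2) := by
    intro t ht
    simp only [Finset.mem_Icc] at ht
    have ht1 : (1:ℝ) ≤ (t:ℝ) := by exact_mod_cast ht.1
    have ht0 : (0:ℝ) < (t:ℝ) := by linarith
    have hp : (2:ℝ) ≤ (ξ + 1) * (1 - (1.3 - 1) ^ 2 / 16) := by nlinarith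
    have hpow : (t:ℝ)^(2:ℝ) ≤ (t:ℝ) ^ ((ξ + 1) * (1 - (1.3 - 1) ^ 2 / 16)) :=
      Real.rpow_le_rpow_of_exponent_le ht1 hp
    have hpow2 : (t:ℝ)^(2:ℝ) = (t:ℝ)^(2:ℕ) := by
      rw [← Real.rpow_natCast]; norm_num
    have hlogpos : 0 ≤ Real.log (((d:ℝ)+1) * t) :=
      Real.log_nonneg (by nlinarith [show (0:ℝ) ≤ (d:ℝ) from Nat.cast_nonneg d])
    have h1 : Real.log (((d : ℝ) + 1) * t) /
            (t : ℝ) ^ ((ξ + 1) * (1 - (1.3 - 1) ^ 2 / 16)) ≤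
        Real.log (((d : ℝ) + 1) * t) / (t:ℝ)^2 := by
      apply div_le_div_of_nonneg_left hlogpos (by positivity)
      rw [← hpow2]; exact hpow
    have hlogmul : Real.log (((d:ℝ)+1) * t) = A + Real.log t :=
      Real.log_mul (by positivity) (by positivity)
    have hlogt : Real.log t ≤ 2 * (Real.sqrt t - 1) := by
      have hs : Real.log (Real.sqrt t) ≤ Real.sqrt t - 1 :=
        Real.log_le_sub_one_of_pos (Real.sqrt_pos.mpr ht0)
      have := Real.log_sqrt ht0.le
      linarith
    have h2 : Real.log (((d : ℝ) + 1) * t) / (t:ℝ)^2 ≤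
        A * ((t:ℝ)^2)⁻¹ + 2 * ((Real.sqrt t - 1)/(t:ℝ)^2) := by
      rw [hlogmul]
      have : (A + Real.log t) / (t:ℝ)^2 ≤ (A + 2*(Real.sqrt t - 1)) / (t:ℝ)^2 := by
        apply div_le_div_of_nonneg_right ?_ (by positivity)
        · linarith
      calc (A + Real.log t) / (t:ℝ)^2 ≤ (A + 2*(Real.sqrt t - 1)) / (t:ℝ)^2 := this
        _ = A * ((t:ℝ)^2)⁻¹ + 2 * ((Real.sqrt t - 1)/(t:ℝ)^2) := by ring
    have hfac : 1 / Real.log 1.3 ≤ 4 := by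
      rw [div_le_iff₀ (by linarith)]; linarith
    have hX0 : 0 ≤ Real.log (((d : ℝ) + 1) * t) /
            (t : ℝ) ^ ((ξ + 1) * (1 - (1.3 - 1) ^ 2 / 16)) := by
      apply div_nonneg hlogpos
      exact (Real.rpow_nonneg ht0.le _)
    calc (1 / Real.log 1.3) * (Real.log (((d : ℝ) + 1) * t) /
            (t : ℝ) ^ ((ξ + 1) * (1 - (1.3 - 1) ^ 2 / 16)))
        ≤ 4 * (Real.log (((d : ℝ) + 1) * t) /
            (t : ℝ) ^ ((ξ + 1) * (1 - (1.3 - 1) ^ 2 / 16))) :=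
          mul_le_mul_of_nonneg_right hfac hX0
      _ ≤ 4 * (A * ((t:ℝ)^2)⁻¹ + 2 * ((Real.sqrt t - 1)/(t:ℝ)^2)) := by
          have := le_trans h1 h2; linarith
      _ = 4 * A * ((t:ℝ)^2)⁻¹ + 8 * ((Real.sqrt t - 1)/(t:ℝ)^2) := by ring
  have hsum := Finset.sum_le_sum hterm
  rw [Finset.sum_add_distrib] at hsum
  rw [← Finset.mul_sum, ← Finset.mul_sum, ← Finset.mul_sum] at hsum
  have hbound : ∑ t ∈ Finset.Icc 1 (T - 1),
        (1 / Real.log 1.3) *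
          (Real.log (((d : ℝ) + 1) * t) /
            (t : ℝ) ^ ((ξ + 1) * (1 - (1.3 - 1) ^ 2 / 16))) ≤ 8 * A + 16 := by
    rw [← Finset.mul_sum]
    have h1 : 4 * A * (∑ t ∈ Finset.Icc 1 (T-1), ((t:ℝ)^2)⁻¹) ≤ 4 * A * 2 :=
      mul_le_mul_of_nonneg_left hS1 (by linarith)
    have h2 : 8 * (∑ t ∈ Finset.Icc 1 (T-1), (Real.sqrt t - 1)/(t:ℝ)^2) ≤ 8 * 2 := by
      linarith
    linarith
  have hlog3d : Real.log (3 * ((d:ℝ)+1)) = Real.log 3 + A :=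
    Real.log_mul (by norm_num) (by positivity)
  rw [hlog3d]
  linarith
end
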